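/- arXiv:1604.05414 — 5 statements merged into one kernel-verified Lean document; each statement's English description precedes it below -/
import Mathlib

section
/- For any tree T, the independence complex of the generic graph G_T is strongly shellable; together with G_T being ESS, this shows G_T is bi-strongly shellable. -/
set_option linter.unusedSectionVars false

open scoped Classical

def StronglyShellable {α : Type*} [DecidableEq α] (F : Finset (Finset α)) : Prop :=
  ∃ l : List (Finset α), l.Nodup ∧ l.toFinset = F ∧
    ∀ i j : Fin l.length, (i : ℕ) < (j : ℕ) →
      ∃ k : Fin l.length, (k : ℕ) < (j : ℕ) ∧
        (l.get j \ l.get k).card = 1 ∧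
        l.get i ∩ l.get j ⊆ l.get k ∧ l.get k ⊆ l.get i ∪ l.get j

def edgeSets {V : Type*} [Fintype V] [DecidableEq V] (G : SimpleGraph V) [DecidableRel G.Adj] :
    Finset (Finset V) :=
  G.edgeFinset.image (Sym2.lift ⟨fun u v => ({u, v} : Finset V), fun u v => Finset.pair_comm u v⟩)

abbrev GenericVertex {V : Type*} (T : SimpleGraph V) : Type _ := {p : V × V // T.Adj p.1 p.2}

/-- The generic graph of a tree T: vertices are ordered pairs (i,k) with {i,k} ∈ E(T)
(representing x_{i,k}); x_{i,k} is adjacent to x_{j,l} iff on the unique path in T from i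
to j, the second vertex is k and the second-to-last vertex is l. -/
def genericGraph {V : Type*} [DecidableEq V] (T : SimpleGraph V) : SimpleGraph (GenericVertex T) :=
  SimpleGraph.fromRel fun a b =>
    ∃ w : T.Walk a.val.1 b.val.1, w.IsPath ∧ 0 < w.length ∧
      w.support[1]? = some a.val.2 ∧ w.support.reverse[1]? = some b.val.2

theorem List.get_map {α β : Type*} (f : α → β) {l : List α} {n : Fin (l.map f).length} :
    (l.map f).get n = f (l.get ⟨n, List.length_map (as := l) f ▸ n.2⟩) := by
  simp [List.get_eq_getElem]

namespace GenShell

open SimpleGraph List Finset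

variable {V : Type*} [Fintype V] [DecidableEq V] {T : SimpleGraph V} [DecidableRel T.Adj]

lemma walk_eq (hT : T.IsTree) {x y : V} {p q : T.Walk x y} (hp : p.IsPath) (hq : q.IsPath) :
    p = q :=
  congrArg Subtype.val (hT.2.path_unique ⟨p, hp⟩ ⟨q, hq⟩)

lemma exists_geodesic (hT : T.IsTree) (x y : V) :
    ∃ p : T.Walk x y, p.IsPath ∧ p.length = T.dist x y := by
  obtain ⟨p, hp⟩ := hT.isConnected.exists_walk_length_eq_dist x y
  exact ⟨p.bypass, p.bypass_isPath,
    le_antisymm (p.length_bypass_le.trans hp.le) (SimpleGraph.dist_le _)⟩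

lemma dist_add_dist_le_of_mem_support {x y z : V} (p : T.Walk x y) (hz : z ∈ p.support) :
    T.dist x z + T.dist z y ≤ p.length := by
  have hlen := congrArg SimpleGraph.Walk.length (p.take_spec hz)
  rw [SimpleGraph.Walk.length_append] at hlen
  have h1 := SimpleGraph.dist_le (p.takeUntil z hz)
  have h2 := SimpleGraph.dist_le (p.dropUntil z hz)
  omega

lemma dist_zero (hT : T.IsTree) {x y : V} : T.dist x y = 0 ↔ x = y :=
  hT.isConnected.dist_eq_zero_iff

lemma dist_pos_of_ne (hT : T.IsTree) {x y : V} (h : x ≠ y) : 0 < T.dist x y :=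
  Nat.pos_of_ne_zero fun h0 => h ((dist_zero hT).1 h0)

lemma adj_dist_ne (hT : T.IsTree) {u w : V} (h : T.Adj u w) (v : V) :
    T.dist v u ≠ T.dist v w := by
  intro he
  obtain ⟨p, hp, hpl⟩ := exists_geodesic hT v u
  obtain ⟨q, hq, hql⟩ := exists_geodesic hT v w
  have hwp : w ∉ p.support := by
    intro hw
    have hle := dist_add_dist_le_of_mem_support p hw
    have h0 : T.dist w u = 0 := by omega
    exact h.ne ((dist_zero hT).1 h0).symm
  have hP : (SimpleGraph.Walk.cons h.symm p.reverse).IsPath := by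
    rw [SimpleGraph.Walk.cons_isPath_iff]
    exact ⟨hp.reverse, by simpa [SimpleGraph.Walk.support_reverse] using hwp⟩
  have heq := walk_eq hT hP hq.reverse
  have hlen := congrArg SimpleGraph.Walk.length heq
  simp only [SimpleGraph.Walk.length_cons, SimpleGraph.Walk.length_reverse] at hlen
  omega

lemma adj_dist_cases (hT : T.IsTree) {u w : V} (h : T.Adj u w) (v : V) :
    T.dist v w = T.dist v u + 1 ∨ T.dist v u = T.dist v w + 1 := by
  have h1 : T.dist v w ≤ T.dist v u + T.dist u w := hT.isConnected.dist_triangle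
  have h2 : T.dist v u ≤ T.dist v w + T.dist w u := hT.isConnected.dist_triangle
  have h3 : T.dist u w = 1 := SimpleGraph.dist_eq_one_iff_adj.2 h
  have h4 : T.dist w u = 1 := SimpleGraph.dist_eq_one_iff_adj.2 h.symm
  have h5 := adj_dist_ne hT h v
  omega

lemma exists_nxt (hT : T.IsTree) {x y : V} (hxy : x ≠ y) :
    ∃ z, T.Adj x z ∧ T.dist z y + 1 = T.dist x y := by
  obtain ⟨p, hp, hl⟩ := exists_geodesic hT x y
  cases p with
  | nil => exact absurd rfl hxy
  | @cons _ c _ h q =>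
    refine ⟨c, h, ?_⟩
    have hq : q.IsPath := ((SimpleGraph.Walk.cons_isPath_iff _ _).1 hp).1
    have h1 : T.dist c y ≤ q.length := SimpleGraph.dist_le q
    have h2 : T.dist x y ≤ T.dist x c + T.dist c y := hT.isConnected.dist_triangle
    have h3 : T.dist x c = 1 := SimpleGraph.dist_eq_one_iff_adj.2 h
    simp only [SimpleGraph.Walk.length_cons] at hl
    omega

lemma closer_nbr_unique (hT : T.IsTree) {x y z w : V} (hz : T.Adj x z) (hw : T.Adj x w)
    (h1 : T.dist z y + 1 = T.dist x y) (h2 : T.dist w y + 1 = T.dist x y) : z = w := by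
  obtain ⟨p, hp, hpl⟩ := exists_geodesic hT z y
  obtain ⟨q, hq, hql⟩ := exists_geodesic hT w y
  have hxp : x ∉ p.support := by
    intro hx
    have hle := dist_add_dist_le_of_mem_support p hx
    have : 0 < T.dist z x := dist_pos_of_ne hT hz.ne'
    have : T.dist x y ≤ T.dist x z + T.dist z y := hT.isConnected.dist_triangle
    omega
  have hxq : x ∉ q.support := by
    intro hx
    have hle := dist_add_dist_le_of_mem_support q hx
    have : 0 < T.dist w x := dist_pos_of_ne hT hw.ne'
    have : T.dist x y ≤ T.dist x w + T.dist w y := hT.isConnected.dist_triangle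
    omega
  have P1 : (SimpleGraph.Walk.cons hz p).IsPath :=
    (SimpleGraph.Walk.cons_isPath_iff _ _).2 ⟨hp, hxp⟩
  have P2 : (SimpleGraph.Walk.cons hw q).IsPath :=
    (SimpleGraph.Walk.cons_isPath_iff _ _).2 ⟨hq, hxq⟩
  have heq := congrArg SimpleGraph.Walk.support (walk_eq hT P1 P2)
  rw [SimpleGraph.Walk.support_cons, SimpleGraph.Walk.support_cons,
    p.support_eq_cons, q.support_eq_cons] at heq
  injection heq with _ h2
  injection h2
lemma face_eq (hT : T.IsTree) {x y a b : V} (hxy : T.Adj x y) (hab : T.Adj a b)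
    (h1 : T.dist x a < T.dist x b) (h2 : T.dist y b < T.dist y a) : x = a ∧ y = b := by
  have e1 : T.dist x b = T.dist x a + 1 := by rcases adj_dist_cases hT hab x with h | h <;> omega
  have e2 : T.dist y a = T.dist y b + 1 := by rcases adj_dist_cases hT hab y with h | h <;> omega
  have hdxy : T.dist x y = 1 := SimpleGraph.dist_eq_one_iff_adj.2 hxy
  have t1 : T.dist x b ≤ T.dist x y + T.dist y b := hT.isConnected.dist_triangle
  have t2 : T.dist y a ≤ T.dist y x + T.dist x a := hT.isConnected.dist_triangle
  have hdyx : T.dist y x = 1 := SimpleGraph.dist_eq_one_iff_adj.2 hxy.symm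
  have exa : T.dist x a = T.dist y b := by omega
  by_cases he : T.dist x a = 0
  · exact ⟨(dist_zero hT).1 he, (dist_zero hT).1 (by omega : T.dist y b = 0)⟩
  · exfalso
    obtain ⟨pa, hpa, hpal⟩ := exists_geodesic hT x a
    obtain ⟨qb, hqb, hqbl⟩ := exists_geodesic hT y b
    -- R : Walk b x, a path
    have hbpa : b ∉ pa.support := by
      intro hb
      have := dist_add_dist_le_of_mem_support pa hb
      have : T.dist b a = 1 := SimpleGraph.dist_eq_one_iff_adj.2 hab.symm
      omega
    have hR : (SimpleGraph.Walk.cons hab.symm pa.reverse).IsPath := by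
      rw [SimpleGraph.Walk.cons_isPath_iff]
      exact ⟨hpa.reverse, by simpa [SimpleGraph.Walk.support_reverse] using hbpa⟩
    -- P : Walk x b, a path
    have hxqb : x ∉ qb.support := by
      intro hx
      have := dist_add_dist_le_of_mem_support qb hx
      omega
    have hP : (SimpleGraph.Walk.cons hxy qb).IsPath := by
      rw [SimpleGraph.Walk.cons_isPath_iff]
      exact ⟨hqb, hxqb⟩
    have heq := walk_eq hT hR.reverse hP
    have ha : a ∈ (SimpleGraph.Walk.cons hab.symm pa.reverse).reverse.support := by
      rw [SimpleGraph.Walk.support_reverse, List.mem_reverse]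
      simp [SimpleGraph.Walk.support_cons, SimpleGraph.Walk.support_reverse]
    rw [heq] at ha
    rw [SimpleGraph.Walk.support_cons] at ha
    rw [List.mem_cons] at ha
    rcases ha with ha | ha
    · rw [ha] at he
      simp [SimpleGraph.dist_self] at he
    · have := dist_add_dist_le_of_mem_support qb ha
      have : T.dist a b = 1 := SimpleGraph.dist_eq_one_iff_adj.2 hab
      omega

lemma crossing (hT : T.IsTree) {a b : V} (hab : T.Adj a b) :
    ∀ {x y : V}, T.dist x a < T.dist x b → T.dist y b < T.dist y a →
      T.dist x y = T.dist x a + 1 + T.dist b y := by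
  suffices H : ∀ n : ℕ, ∀ x y : V, T.dist x y = n → T.dist x a < T.dist x b →
      T.dist y b < T.dist y a → T.dist x y = T.dist x a + 1 + T.dist b y by
    intro x y h1 h2
    exact H (T.dist x y) x y rfl h1 h2
  intro n
  induction n using Nat.strong_induction_on with
  | _ n IH =>
    intro x y hn h1 h2
    have hxy : x ≠ y := by rintro rfl; omega
    obtain ⟨x', hadj, hdx'⟩ := exists_nxt hT hxy
    rcases adj_dist_cases hT hab x' with hc | hc
    · -- x' on a-side
      have hIH := IH (T.dist x' y) (by omega) x' y rfl (by omega) h2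
      have ht : T.dist x a ≤ T.dist x x' + T.dist x' a := hT.isConnected.dist_triangle
      have ht2 : T.dist x y ≤ T.dist x a + T.dist a b + T.dist b y := by
        have u1 : T.dist x y ≤ T.dist x a + T.dist a y := hT.isConnected.dist_triangle
        have u2 : T.dist a y ≤ T.dist a b + T.dist b y := hT.isConnected.dist_triangle
        omega
      have hd1 : T.dist x x' = 1 := SimpleGraph.dist_eq_one_iff_adj.2 hadj
      have hd2 : T.dist a b = 1 := SimpleGraph.dist_eq_one_iff_adj.2 hab
      omega
    · -- x' on b-side : face_eq forces x = a, x' = b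
      obtain ⟨rfl, rfl⟩ := face_eq hT hadj hab h1 (by omega)
      rw [SimpleGraph.dist_self]
      omega

noncomputable def nxt (hT : T.IsTree) (x y : V) : V :=
  if h : x = y then x else (exists_nxt hT h).choose

lemma nxt_adj (hT : T.IsTree) {x y : V} (h : x ≠ y) : T.Adj x (nxt hT x y) := by
  rw [nxt, dif_neg h]; exact (exists_nxt hT h).choose_spec.1

lemma nxt_dist (hT : T.IsTree) {x y : V} (h : x ≠ y) :
    T.dist (nxt hT x y) y + 1 = T.dist x y := by
  rw [nxt, dif_neg h]; exact (exists_nxt hT h).choose_spec.2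

lemma nxt_unique (hT : T.IsTree) {x y z : V} (hz : T.Adj x z)
    (hd : T.dist z y + 1 = T.dist x y) : z = nxt hT x y := by
  have hxy : x ≠ y := by
    intro h; rw [h] at hd; rw [SimpleGraph.dist_self] at hd; omega
  exact closer_nbr_unique hT hz (nxt_adj hT hxy) hd (nxt_dist hT hxy)
lemma path_length_eq (hT : T.IsTree) {x y : V} {P : T.Walk x y} (hP : P.IsPath) :
    P.length = T.dist x y := by
  obtain ⟨g, hg, hgl⟩ := exists_geodesic hT x y
  rw [walk_eq hT hP hg, hgl]

lemma second_dist (hT : T.IsTree) {x y : V} (P : T.Walk x y) (hP : P.IsPath)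
    (hl : 0 < P.length) {c : V} (h1 : P.support[1]? = some c) :
    T.Adj x c ∧ T.dist c y + 1 = T.dist x y := by
  cases P with
  | nil => simp at hl
  | @cons _ z _ h q =>
    have hq : q.IsPath := ((SimpleGraph.Walk.cons_isPath_iff _ _).1 hP).1
    have hsupp : (SimpleGraph.Walk.cons h q).support[1]? = some z := by
      rw [SimpleGraph.Walk.support_cons, q.support_eq_cons]
      simp
    rw [hsupp] at h1
    have hz : z = c := by injection h1
    subst hz
    refine ⟨h, ?_⟩
    have l1 := path_length_eq hT hP
    have l2 := path_length_eq hT hq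
    rw [SimpleGraph.Walk.length_cons] at l1
    omega

lemma second_eq (hT : T.IsTree) {x y : V} (P : T.Walk x y) (hP : P.IsPath) {c : V}
    (hc : T.Adj x c) (hd : T.dist c y + 1 = T.dist x y) : P.support[1]? = some c := by
  cases P with
  | nil =>
    rw [SimpleGraph.dist_self] at hd
    omega
  | @cons _ z _ h q =>
    have hq : q.IsPath := ((SimpleGraph.Walk.cons_isPath_iff _ _).1 hP).1
    have l1 := path_length_eq hT hP
    have l2 := path_length_eq hT hq
    rw [SimpleGraph.Walk.length_cons] at l1
    have hcz : c = z := closer_nbr_unique hT hc h hd (by omega)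
    rw [SimpleGraph.Walk.support_cons, q.support_eq_cons, hcz]
    simp

lemma dist_of_rel (hT : T.IsTree) {a b : GenericVertex T}
    (hrel : ∃ w : T.Walk a.val.1 b.val.1, w.IsPath ∧ 0 < w.length ∧
      w.support[1]? = some a.val.2 ∧ w.support.reverse[1]? = some b.val.2) :
    T.dist b.1.1 a.1.2 < T.dist b.1.1 a.1.1 ∧ T.dist a.1.1 b.1.2 < T.dist a.1.1 b.1.1 := by
  obtain ⟨P, hP, hl, h1, h2⟩ := hrel
  have s1 := second_dist hT P hP hl h1
  have hrev : P.reverse.support[1]? = some b.1.2 := by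
    rwa [SimpleGraph.Walk.support_reverse]
  have s2 := second_dist hT P.reverse hP.reverse
    (by simpa [SimpleGraph.Walk.length_reverse] using hl) hrev
  have c1 := SimpleGraph.dist_comm (G := T) (u := b.1.1) (v := a.1.2)
  have c2 := SimpleGraph.dist_comm (G := T) (u := b.1.1) (v := a.1.1)
  have c3 := SimpleGraph.dist_comm (G := T) (u := a.1.1) (v := b.1.2)
  have c4 := s1.2
  have c5 := s2.2
  omega

lemma generic_adj (hT : T.IsTree) (a b : GenericVertex T) :
    (genericGraph T).Adj a b ↔
      T.dist b.1.1 a.1.2 < T.dist b.1.1 a.1.1 ∧ T.dist a.1.1 b.1.2 < T.dist a.1.1 b.1.1 := by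
  rw [genericGraph, SimpleGraph.fromRel_adj]
  constructor
  · rintro ⟨hne, hrel | hrel⟩
    · exact dist_of_rel hT hrel
    · exact (dist_of_rel hT hrel).symm
  · rintro ⟨h1, h2⟩
    have hne11 : a.1.1 ≠ b.1.1 := by
      intro he
      rw [he] at h2
      rw [SimpleGraph.dist_self] at h2
      omega
    refine ⟨?_, Or.inl ?_⟩
    · intro he; exact hne11 (by rw [he])
    · obtain ⟨P, hP, hPl⟩ := exists_geodesic hT a.1.1 b.1.1
      have hlpos : 0 < P.length := by
        rw [hPl]; exact dist_pos_of_ne hT hne11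
      refine ⟨P, hP, hlpos, ?_, ?_⟩
      · apply second_eq hT P hP a.2
        rcases adj_dist_cases hT a.2 b.1.1 with h | h
        · omega
        · have := SimpleGraph.dist_comm (G := T) (u := b.1.1) (v := a.1.2)
          have := SimpleGraph.dist_comm (G := T) (u := b.1.1) (v := a.1.1)
          omega
      · rw [← SimpleGraph.Walk.support_reverse]
        apply second_eq hT P.reverse hP.reverse b.2
        rcases adj_dist_cases hT b.2 a.1.1 with h | h
        · omega
        · have := SimpleGraph.dist_comm (G := T) (u := a.1.1) (v := b.1.2)
          have := SimpleGraph.dist_comm (G := T) (u := a.1.1) (v := b.1.1)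
          omega
variable (T) in
def IndepS (s : Finset (GenericVertex T)) : Prop :=
  ∀ a ∈ s, ∀ b ∈ s, ¬ (genericGraph T).Adj a b

variable (T) in
noncomputable def Av (v : V) : Finset (GenericVertex T) :=
  Finset.univ.filter fun p => T.dist v p.1.1 < T.dist v p.1.2

lemma mem_Av {v : V} {z : GenericVertex T} :
    z ∈ Av T v ↔ T.dist v z.1.1 < T.dist v z.1.2 := by
  simp [Av]

lemma Av_indep (hT : T.IsTree) (v : V) : IndepS T (Av T v) := by
  intro a ha b hb hadj
  rw [mem_Av] at ha hb
  rw [generic_adj hT] at hadj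
  have c1 := crossing hT a.2 ha hadj.1
  have c2 := crossing hT b.2 hb hadj.2
  have d1 := SimpleGraph.dist_comm (G := T) (u := v) (v := a.1.1)
  have d2 := SimpleGraph.dist_comm (G := T) (u := v) (v := b.1.1)
  omega

lemma Av_sub (hT : T.IsTree) (v : V) {t : Finset (GenericVertex T)} (ht : IndepS T t)
    (hsub : Av T v ⊆ t) : t ⊆ Av T v := by
  intro z hz
  by_contra hznot
  rw [mem_Av] at hznot
  have hba : T.dist v z.1.2 < T.dist v z.1.1 := by
    rcases adj_dist_cases hT z.2 v with h | h <;> omega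
  by_cases hbv : z.1.2 = v
  · have hva : T.Adj v z.1.1 := hbv ▸ z.2.symm
    have hvne : z.1.1 ≠ v := fun he => z.2.ne (he.trans hbv.symm)
    have hmem : (⟨(v, z.1.1), hva⟩ : GenericVertex T) ∈ Av T v := by
      rw [mem_Av]
      simpa [SimpleGraph.dist_self] using dist_pos_of_ne hT (Ne.symm hvne)
    refine ht _ hz _ (hsub hmem) ?_
    rw [generic_adj hT]
    refine ⟨?_, ?_⟩
    · simp only
      rw [hbv]
      simpa [SimpleGraph.dist_self] using dist_pos_of_ne hT (Ne.symm hvne)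
    · simp only
      simpa [SimpleGraph.dist_self] using dist_pos_of_ne hT hvne
  · set u' := nxt hT z.1.2 v with hu'
    have hadju' : T.Adj z.1.2 u' := nxt_adj hT hbv
    have hdist : T.dist u' v + 1 = T.dist z.1.2 v := nxt_dist hT hbv
    have dc1 := SimpleGraph.dist_comm (G := T) (u := v) (v := u')
    have dc2 := SimpleGraph.dist_comm (G := T) (u := v) (v := z.1.2)
    have hmem : (⟨(u', z.1.2), hadju'.symm⟩ : GenericVertex T) ∈ Av T v := by
      rw [mem_Av]; simp only; omega
    refine ht _ hz _ (hsub hmem) ?_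
    rw [generic_adj hT]
    simp only
    have hu'a : u' ≠ z.1.1 := by
      intro he
      rw [he] at hdist
      have := SimpleGraph.dist_comm (G := T) (u := v) (v := z.1.1)
      omega
    have e1 : T.dist u' z.1.2 = 1 := SimpleGraph.dist_eq_one_iff_adj.2 hadju'.symm
    have e2 : T.dist z.1.1 z.1.2 = 1 := SimpleGraph.dist_eq_one_iff_adj.2 z.2
    have e3 : T.dist u' z.1.1 ≤ T.dist u' z.1.2 + T.dist z.1.2 z.1.1 :=
      hT.isConnected.dist_triangle
    have e4 : T.dist z.1.1 u' ≤ T.dist z.1.1 z.1.2 + T.dist z.1.2 u' :=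
      hT.isConnected.dist_triangle
    have e5 : T.dist z.1.2 z.1.1 = 1 := SimpleGraph.dist_eq_one_iff_adj.2 z.2.symm
    have e6 : T.dist z.1.2 u' = 1 := SimpleGraph.dist_eq_one_iff_adj.2 hadju'
    have e7 := adj_dist_ne hT z.2 u'
    have e8 := adj_dist_ne hT hadju' z.1.1
    have e9 : T.dist u' z.1.1 ≠ 0 := fun h0 => hu'a ((dist_zero hT).1 h0)
    have e10 : T.dist z.1.1 u' ≠ 0 := fun h0 => hu'a ((dist_zero hT).1 h0).symm
    exact ⟨by omega, by omega⟩

lemma Av_mem_filter (hT : T.IsTree) (v : V) :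
    IndepS T (Av T v) ∧ ∀ t, IndepS T t → Av T v ⊆ t → Av T v = t :=
  ⟨Av_indep hT v, fun _ ht hsub => Finset.Subset.antisymm hsub (Av_sub hT v ht hsub)⟩

lemma not_both (hT : T.IsTree) {s : Finset (GenericVertex T)} (hs : IndepS T s) {u w : V}
    (huw : T.Adj u w) (h1 : (⟨(u, w), huw⟩ : GenericVertex T) ∈ s)
    (h2 : (⟨(w, u), huw.symm⟩ : GenericVertex T) ∈ s) : False := by
  refine hs _ h1 _ h2 ?_
  rw [generic_adj hT]
  constructor
  · simpa [SimpleGraph.dist_self] using dist_pos_of_ne hT huw.ne'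
  · simpa [SimpleGraph.dist_self] using dist_pos_of_ne hT huw.ne

lemma head_inj (hT : T.IsTree) {s : Finset (GenericVertex T)} (hs : IndepS T s)
    {a b : GenericVertex T} (ha : a ∈ s) (hb : b ∈ s) (h2 : a.1.2 = b.1.2) : a = b := by
  by_cases h1 : a.1.1 = b.1.1
  · exact Subtype.ext (Prod.ext h1 h2)
  · exfalso
    refine hs _ ha _ hb ?_
    rw [generic_adj hT]
    have hbk : T.Adj b.1.1 a.1.2 := by rw [h2]; exact b.2
    have e1 : T.dist b.1.1 a.1.2 = 1 := SimpleGraph.dist_eq_one_iff_adj.2 hbk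
    have e2 : T.dist a.1.1 a.1.2 = 1 := SimpleGraph.dist_eq_one_iff_adj.2 a.2
    have e7 : T.dist a.1.1 b.1.2 = 1 := by rw [← h2]; exact e2
    have e3 : T.dist b.1.1 a.1.1 ≤ T.dist b.1.1 a.1.2 + T.dist a.1.2 a.1.1 :=
      hT.isConnected.dist_triangle
    have e4 : T.dist a.1.1 b.1.1 ≤ T.dist a.1.1 a.1.2 + T.dist a.1.2 b.1.1 :=
      hT.isConnected.dist_triangle
    have e5 := adj_dist_ne hT a.2 b.1.1
    have e6 := adj_dist_ne hT b.2 a.1.1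
    have e8 : T.dist a.1.1 b.1.1 ≠ 0 := fun h0 => h1 ((dist_zero hT).1 h0)
    have e9 : T.dist b.1.1 a.1.1 ≠ 0 := fun h0 => h1 ((dist_zero hT).1 h0).symm
    have c1 := SimpleGraph.dist_comm (G := T) (u := a.1.2) (v := a.1.1)
    have c2 := SimpleGraph.dist_comm (G := T) (u := a.1.2) (v := b.1.1)
    exact ⟨by omega, by omega⟩
lemma cover (hT : T.IsTree) {s : Finset (GenericVertex T)} (hs : IndepS T s)
    (hmax : ∀ t, IndepS T t → s ⊆ t → s = t) {u w : V} (huw : T.Adj u w) :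
    (⟨(u, w), huw⟩ : GenericVertex T) ∈ s ∨ (⟨(w, u), huw.symm⟩ : GenericVertex T) ∈ s := by
  by_contra hcon
  push_neg at hcon
  obtain ⟨huws, hwus⟩ := hcon
  -- for any arrow x not in s, there is z in s adjacent to x
  have key : ∀ x : GenericVertex T, x ∉ s → ∃ z ∈ s, (genericGraph T).Adj x z := by
    intro x hx
    have h1 : ¬ IndepS T (insert x s) := by
      intro hind
      exact hx (by rw [hmax _ hind (Finset.subset_insert _ _)]; exact Finset.mem_insert_self _ _)
    rw [IndepS] at h1
    push_neg at h1
    obtain ⟨a, ha, b, hb, hadj⟩ := h1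
    rw [Finset.mem_insert] at ha hb
    rcases ha with rfl | ha
    · rcases hb with rfl | hb
      · exact absurd hadj (SimpleGraph.irrefl _)
      · exact ⟨b, hb, hadj⟩
    · rcases hb with rfl | hb
      · exact ⟨a, ha, hadj.symm⟩
      · exact absurd hadj (hs _ ha _ hb)
  obtain ⟨z, hzs, hz⟩ := key _ huws
  obtain ⟨z', hz's, hz'⟩ := key _ hwus
  rw [generic_adj hT] at hz hz'
  simp only at hz hz'
  -- hz : dist z11 w < dist z11 u ∧ dist u z12 < dist u z11
  -- hz' : dist z'11 u < dist z'11 w ∧ dist w z'12 < dist w z'11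
  refine hs _ hzs _ hz's ?_
  rw [generic_adj hT]
  have cross1 : T.dist z.1.1 z'.1.1 = T.dist z.1.1 w + 1 + T.dist u z'.1.1 :=
    crossing hT huw.symm hz.1 hz'.1
  constructor
  · by_contra hc
    have hne := adj_dist_ne hT z.2 z'.1.1
    have hlt : T.dist z'.1.1 z.1.1 < T.dist z'.1.1 z.1.2 := by
      have := SimpleGraph.dist_comm (G := T) (u := z'.1.1) (v := z.1.1)
      have := SimpleGraph.dist_comm (G := T) (u := z.1.1) (v := z'.1.1)
      omega
    have cross2 : T.dist z'.1.1 u = T.dist z'.1.1 z.1.1 + 1 + T.dist z.1.2 u :=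
      crossing hT z.2 hlt hz.2
    have d1 := SimpleGraph.dist_comm (G := T) (u := z'.1.1) (v := z.1.1)
    have d2 := SimpleGraph.dist_comm (G := T) (u := u) (v := z'.1.1)
    omega
  · by_contra hc
    have hne := adj_dist_ne hT z'.2 z.1.1
    have hlt : T.dist z.1.1 z'.1.1 < T.dist z.1.1 z'.1.2 := by omega
    have cross2 : T.dist z.1.1 w = T.dist z.1.1 z'.1.1 + 1 + T.dist z'.1.2 w :=
      crossing hT z'.2 hlt hz'.2
    omega

lemma card_s (hT : T.IsTree) {s : Finset (GenericVertex T)} (hs : IndepS T s)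
    (hmax : ∀ t, IndepS T t → s ⊆ t → s = t) : s.card + 1 = Fintype.card V := by
  rw [← hT.card_edgeFinset]
  congr 1
  apply Finset.card_bij (fun (z : GenericVertex T) _ => Sym2.mk z.1.1 z.1.2)
  · intro z hz
    rw [SimpleGraph.mem_edgeFinset, SimpleGraph.mem_edgeSet]
    exact z.2
  · intro z hz z' hz' heq
    rw [Sym2.mk_eq_mk_iff] at heq
    rcases heq with heq | heq
    · exact Subtype.ext (by
        have h1 := congrArg Prod.fst heq
        have h2 := congrArg Prod.snd heq
        exact Prod.ext h1 h2)
    · exfalso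
      have h1 : z.1.1 = z'.1.2 := congrArg Prod.fst heq
      have h2 : z.1.2 = z'.1.1 := congrArg Prod.snd heq
      have hz1 : z = ⟨(z.1.1, z.1.2), z.2⟩ := Subtype.ext rfl
      have hzz : z' = ⟨(z.1.2, z.1.1), (h1 ▸ h2 ▸ z'.2 : T.Adj z.1.2 z.1.1)⟩ := by
        apply Subtype.ext
        exact (Prod.ext h2.symm h1.symm : z'.1 = (z.1.2, z.1.1))
      apply not_both hT hs (u := z.1.1) (w := z.1.2) z.2
      · exact (by rw [← hz1] at *; exact hz)
      · rw [← hzz] at *; exact hz'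
  · intro e he
    rw [SimpleGraph.mem_edgeFinset] at he
    induction e with
    | _ u w =>
      rw [SimpleGraph.mem_edgeSet] at he
      rcases cover hT hs hmax he with h | h
      · exact ⟨_, h, rfl⟩
      · exact ⟨_, h, Sym2.eq_swap⟩

lemma exists_root (hT : T.IsTree) {s : Finset (GenericVertex T)} (hs : IndepS T s)
    (hmax : ∀ t, IndepS T t → s ⊆ t → s = t) : ∃ v : V, ∀ z ∈ s, z.1.2 ≠ v := by
  by_contra hcon
  push_neg at hcon
  have hsub : (Finset.univ : Finset V) ⊆ s.image (fun z => z.1.2) := by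
    intro v _
    obtain ⟨z, hz, hzv⟩ := hcon v
    exact Finset.mem_image.2 ⟨z, hz, hzv⟩
  have hcard : Fintype.card V ≤ (s.image (fun z => z.1.2)).card := by
    simpa using Finset.card_le_card hsub
  have himg : (s.image (fun z => z.1.2)).card = s.card :=
    Finset.card_image_of_injOn (fun a ha b hb hab => head_inj hT hs ha hb hab)
  have := card_s hT hs hmax
  omega

lemma out_arrows (hT : T.IsTree) {s : Finset (GenericVertex T)} (hs : IndepS T s)
    (hmax : ∀ t, IndepS T t → s ⊆ t → s = t) {v : V} (hv : ∀ z ∈ s, z.1.2 ≠ v) :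
    ∀ n : ℕ, ∀ u w : V, ∀ huw : T.Adj u w, T.dist v u = n → T.dist v u < T.dist v w →
      (⟨(u, w), huw⟩ : GenericVertex T) ∈ s := by
  intro n
  induction n using Nat.strong_induction_on with
  | _ n IH =>
    intro u w huw hn hlt
    by_cases huv : u = v
    · subst huv
      rcases cover hT hs hmax huw with h | h
      · exact h
      · exact absurd rfl (hv _ h)
    · have hune : u ≠ v := huv
      set u' := nxt hT u v with hu'
      have hadj : T.Adj u u' := nxt_adj hT hune
      have hd : T.dist u' v + 1 = T.dist u v := nxt_dist hT hune
      have dc1 := SimpleGraph.dist_comm (G := T) (u := v) (v := u')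
      have dc2 := SimpleGraph.dist_comm (G := T) (u := v) (v := u)
      have hmem : (⟨(u', u), hadj.symm⟩ : GenericVertex T) ∈ s :=
        IH (T.dist v u') (by omega) u' u hadj.symm rfl (by omega)
      rcases cover hT hs hmax huw with h | h
      · exact h
      · exfalso
        have : (⟨(w, u), huw.symm⟩ : GenericVertex T) = ⟨(u', u), hadj.symm⟩ :=
          head_inj hT hs h hmem rfl
        have hwu' : w = u' := congrArg (fun z => z.1.1) this
        rw [hwu'] at hlt
        omega

lemma maximal_eq_Av (hT : T.IsTree) {s : Finset (GenericVertex T)} (hs : IndepS T s)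
    (hmax : ∀ t, IndepS T t → s ⊆ t → s = t) : ∃ v, s = Av T v := by
  obtain ⟨v, hv⟩ := exists_root hT hs hmax
  refine ⟨v, ?_⟩
  have h1 : Av T v ⊆ s := by
    intro z hz
    rw [mem_Av] at hz
    exact out_arrows hT hs hmax hv (T.dist v z.1.1) z.1.1 z.1.2 z.2 rfl hz
  apply Finset.Subset.antisymm _ h1
  intro z hz
  rw [mem_Av]
  by_contra hc
  have hba : T.dist v z.1.2 < T.dist v z.1.1 := by
    rcases adj_dist_cases hT z.2 v with h | h <;> omega
  have hmem : (⟨(z.1.2, z.1.1), z.2.symm⟩ : GenericVertex T) ∈ Av T v := by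
    rw [mem_Av]; simpa using hba
  exact not_both hT hs (u := z.1.1) (w := z.1.2) z.2 hz (h1 hmem)

lemma Av_inj (hT : T.IsTree) : Function.Injective (Av T) := by
  intro u v h
  by_contra hne
  set w := nxt hT u v with hw
  have hadj : T.Adj u w := nxt_adj hT hne
  have hd : T.dist w v + 1 = T.dist u v := nxt_dist hT hne
  have hmem : (⟨(u, w), hadj⟩ : GenericVertex T) ∈ Av T u := by
    rw [mem_Av]
    simpa [SimpleGraph.dist_self] using dist_pos_of_ne hT hadj.ne
  rw [h, mem_Av] at hmem
  simp only at hmem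
  have dc1 := SimpleGraph.dist_comm (G := T) (u := v) (v := w)
  have dc2 := SimpleGraph.dist_comm (G := T) (u := v) (v := u)
  omega
lemma Av_step (hT : T.IsTree) {r u w : V} (hne : u ≠ w) (hle : T.dist r u ≤ T.dist r w)
    (hwr : w ≠ r) :
    ((Av T w \ Av T (nxt hT w r)).card = 1) ∧
    (Av T u ∩ Av T w ⊆ Av T (nxt hT w r)) ∧ (Av T (nxt hT w r) ⊆ Av T u ∪ Av T w) := by
  set p := nxt hT w r with hp
  have hadj : T.Adj w p := nxt_adj hT hwr
  have hd : T.dist p r + 1 = T.dist w r := nxt_dist hT hwr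
  have dc1 := SimpleGraph.dist_comm (G := T) (u := r) (v := p)
  have dc2 := SimpleGraph.dist_comm (G := T) (u := r) (v := w)
  have dc3 := SimpleGraph.dist_comm (G := T) (u := r) (v := u)
  have key : T.dist u p < T.dist u w := by
    by_contra hc
    have hne2 := adj_dist_ne hT hadj u
    have hlt : T.dist u w < T.dist u p := by omega
    have hcr : T.dist r p < T.dist r w := by omega
    have cross := crossing hT hadj hlt hcr
    have dc4 := SimpleGraph.dist_comm (G := T) (u := u) (v := r)
    have dc5 := SimpleGraph.dist_comm (G := T) (u := p) (v := r)
    have hpos : T.dist u w ≠ 0 := fun h0 => hne ((dist_zero hT).1 h0)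
    omega
  have hsd : Av T w \ Av T p = {⟨(w, p), hadj⟩} := by
    ext z
    rw [Finset.mem_sdiff, mem_Av, mem_Av, Finset.mem_singleton]
    constructor
    · rintro ⟨hzw, hzp⟩
      have horient : T.dist p z.1.2 < T.dist p z.1.1 := by
        rcases adj_dist_cases hT z.2 p with h | h <;> omega
      obtain ⟨h1, h2⟩ := face_eq hT hadj z.2 hzw horient
      exact Subtype.ext (show z.1 = (w, p) from Prod.ext h1.symm h2.symm)
    · rintro rfl
      constructor
      · simpa [SimpleGraph.dist_self] using dist_pos_of_ne hT hadj.ne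
      · simp [SimpleGraph.dist_self]
  refine ⟨by rw [hsd]; simp, ?_, ?_⟩
  · intro z hz
    rw [Finset.mem_inter, mem_Av, mem_Av] at hz
    rw [mem_Av]
    by_contra hc
    have horient : T.dist p z.1.2 < T.dist p z.1.1 := by
      rcases adj_dist_cases hT z.2 p with h | h <;> omega
    obtain ⟨h1, h2⟩ := face_eq hT hadj z.2 hz.2 horient
    have hz1 := hz.1
    rw [← h1, ← h2] at hz1
    omega
  · intro z hz
    rw [mem_Av] at hz
    rw [Finset.mem_union, mem_Av, mem_Av]
    by_cases hw : T.dist w z.1.1 < T.dist w z.1.2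
    · right; exact hw
    · left
      have horient : T.dist w z.1.2 < T.dist w z.1.1 := by
        rcases adj_dist_cases hT z.2 w with h | h <;> omega
      obtain ⟨h1, h2⟩ := face_eq hT hadj.symm z.2 hz horient
      rw [← h1, ← h2]
      exact key

lemma part1 (hT : T.IsTree) :
    StronglyShellable (Finset.univ.filter fun s : Finset (GenericVertex T) =>
      (∀ a ∈ s, ∀ b ∈ s, ¬ (genericGraph T).Adj a b) ∧
      (∀ t : Finset (GenericVertex T),
        (∀ a ∈ t, ∀ b ∈ t, ¬ (genericGraph T).Adj a b) → s ⊆ t → s = t)) := by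
  obtain ⟨r⟩ := hT.isConnected.nonempty
  have h1 : IsTotal V (fun a b => T.dist r a ≤ T.dist r b) := ⟨fun a b => le_total _ _⟩
  have h2 : IsTrans V (fun a b => T.dist r a ≤ T.dist r b) := ⟨fun a b c => le_trans⟩
  set vl := List.insertionSort (fun a b => T.dist r a ≤ T.dist r b) Finset.univ.toList with hvl
  have hperm : vl.Perm Finset.univ.toList :=
    List.perm_insertionSort (fun a b => T.dist r a ≤ T.dist r b) _
  have hnodup : vl.Nodup := hperm.nodup_iff.2 (Finset.nodup_toList _)
  have hsorted : vl.Pairwise (fun a b => T.dist r a ≤ T.dist r b) :=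
    List.pairwise_insertionSort _ _
  have hmemvl : ∀ x : V, x ∈ vl := fun x => hperm.mem_iff.2 (by simp)
  refine ⟨vl.map (Av T), hnodup.map (Av_inj hT), ?_, ?_⟩
  · ext s
    simp only [List.mem_toFinset, List.mem_map, Finset.mem_filter, Finset.mem_univ, true_and]
    constructor
    · rintro ⟨v, _, rfl⟩
      exact Av_mem_filter hT v
    · rintro ⟨hind, hmax⟩
      obtain ⟨v, rfl⟩ := maximal_eq_Av hT hind hmax
      exact ⟨v, hmemvl v, rfl⟩
  · intro i j hij
    have hlen : (vl.map (Av T)).length = vl.length := List.length_map _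
    set i' : Fin vl.length := Fin.cast hlen i with hi'
    set j' : Fin vl.length := Fin.cast hlen j with hj'
    have hgeti : (vl.map (Av T)).get i = Av T (vl.get i') := by
      simp [List.get_map, hi']
    have hgetj : (vl.map (Av T)).get j = Av T (vl.get j') := by
      simp [List.get_map, hj']
    set u := vl.get i' with hu
    set w := vl.get j' with hwdef
    have hij' : i' < j' := hij
    have hne : u ≠ w := fun he => by
      have := (List.Nodup.get_inj_iff hnodup).1 he
      rw [this] at hij'
      exact lt_irrefl _ hij'
    have hle : T.dist r u ≤ T.dist r w := List.Pairwise.rel_get_of_lt hsorted hij'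
    have hwr : w ≠ r := by
      intro he
      apply hne
      have h0 : T.dist r w = 0 := by rw [he, SimpleGraph.dist_self]
      have h0u : T.dist r u = 0 := by omega
      exact ((dist_zero hT).1 h0u).symm.trans he.symm
    set p := nxt hT w r with hp
    have hdp : T.dist p r + 1 = T.dist w r := nxt_dist hT hwr
    obtain ⟨k', hk'⟩ := List.mem_iff_get.1 (hmemvl p)
    have dc1 := SimpleGraph.dist_comm (G := T) (u := r) (v := p)
    have dc2 := SimpleGraph.dist_comm (G := T) (u := r) (v := w)
    have hk'j : k' < j' := by
      rcases lt_trichotomy k' j' with h | h | h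
      · exact h
      · exfalso
        rw [h, ← hwdef] at hk'
        rw [hk'] at hdp
        omega
      · exfalso
        have := List.Pairwise.rel_get_of_lt hsorted h
        rw [hk', ← hwdef] at this
        omega
    refine ⟨⟨k'.1, by rw [hlen]; exact k'.2⟩, by exact hk'j, ?_⟩
    have hgetk : (vl.map (Av T)).get ⟨k'.1, by rw [hlen]; exact k'.2⟩ = Av T p := by
      simp only [List.get_map]
      rw [show (⟨k'.1, _⟩ : Fin vl.length) = k' from rfl] at *
      rw [hk']
    rw [hgeti, hgetj, hgetk]
    exact Av_step hT hne hle hwr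
variable (T) in
noncomputable def Sp (hT : T.IsTree) (x y : V) : Finset (GenericVertex T) :=
  if h : x = y then ∅
  else {⟨(x, nxt hT x y), nxt_adj hT h⟩, ⟨(y, nxt hT y x), nxt_adj hT (Ne.symm h)⟩}

lemma Sp_eq (hT : T.IsTree) {x y : V} (h : x ≠ y) :
    Sp T hT x y =
      {⟨(x, nxt hT x y), nxt_adj hT h⟩, ⟨(y, nxt hT y x), nxt_adj hT (Ne.symm h)⟩} := by
  rw [Sp, dif_neg h]

lemma Sp_comm (hT : T.IsTree) (x y : V) : Sp T hT x y = Sp T hT y x := by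
  by_cases h : x = y
  · subst h; rfl
  · rw [Sp_eq hT h, Sp_eq hT (Ne.symm h)]
    exact Finset.pair_comm _ _

lemma Sp_card (hT : T.IsTree) {x y : V} (h : x ≠ y) : (Sp T hT x y).card = 2 := by
  rw [Sp_eq hT h]
  rw [Finset.card_insert_of_notMem, Finset.card_singleton]
  simp only [Finset.mem_singleton]
  intro he
  exact h (congrArg (fun z => z.1.1) he)

lemma Sp_adj (hT : T.IsTree) {x y : V} (h : x ≠ y) :
    (genericGraph T).Adj ⟨(x, nxt hT x y), nxt_adj hT h⟩
      ⟨(y, nxt hT y x), nxt_adj hT (Ne.symm h)⟩ := by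
  rw [generic_adj hT]
  have d1 := nxt_dist hT h
  have d2 := nxt_dist hT (Ne.symm h)
  have c1 := SimpleGraph.dist_comm (G := T) (u := y) (v := nxt hT x y)
  have c2 := SimpleGraph.dist_comm (G := T) (u := x) (v := y)
  have c3 := SimpleGraph.dist_comm (G := T) (u := x) (v := nxt hT y x)
  exact ⟨by simp only; omega, by simp only; omega⟩

lemma Sp_mem_edgeSets (hT : T.IsTree) {x y : V} (h : x ≠ y) :
    Sp T hT x y ∈ edgeSets (genericGraph T) := by
  rw [edgeSets, Finset.mem_image]
  refine ⟨Sym2.mk ⟨(x, nxt hT x y), nxt_adj hT h⟩ ⟨(y, nxt hT y x), nxt_adj hT (Ne.symm h)⟩,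
    ?_, ?_⟩
  · rw [SimpleGraph.mem_edgeFinset, SimpleGraph.mem_edgeSet]
    exact Sp_adj hT h
  · rw [Sp_eq hT h]
    rfl

lemma mem_edgeSets_iff_Sp (hT : T.IsTree) {e : Finset (GenericVertex T)}
    (he : e ∈ edgeSets (genericGraph T)) : ∃ x y : V, x ≠ y ∧ e = Sp T hT x y := by
  rw [edgeSets, Finset.mem_image] at he
  obtain ⟨E, hE, rfl⟩ := he
  induction E with
  | _ A B =>
    rw [SimpleGraph.mem_edgeFinset, SimpleGraph.mem_edgeSet] at hE
    have hadj := hE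
    rw [generic_adj hT] at hadj
    have hne : A.1.1 ≠ B.1.1 := by
      intro hh
      rw [hh, SimpleGraph.dist_self] at hadj
      omega
    refine ⟨A.1.1, B.1.1, hne, ?_⟩
    have hA2 : A.1.2 = nxt hT A.1.1 B.1.1 := by
      apply nxt_unique hT A.2
      have := adj_dist_ne hT A.2 B.1.1
      have c1 := SimpleGraph.dist_comm (G := T) (u := B.1.1) (v := A.1.2)
      have c2 := SimpleGraph.dist_comm (G := T) (u := B.1.1) (v := A.1.1)
      rcases adj_dist_cases hT A.2 B.1.1 with hh | hh
      · omega
      · omega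
    have hB2 : B.1.2 = nxt hT B.1.1 A.1.1 := by
      apply nxt_unique hT B.2
      have := adj_dist_ne hT B.2 A.1.1
      have c1 := SimpleGraph.dist_comm (G := T) (u := A.1.1) (v := B.1.2)
      have c2 := SimpleGraph.dist_comm (G := T) (u := A.1.1) (v := B.1.1)
      rcases adj_dist_cases hT B.2 A.1.1 with hh | hh
      · omega
      · omega
    rw [Sp_eq hT hne]
    have eA : A = ⟨(A.1.1, nxt hT A.1.1 B.1.1), nxt_adj hT hne⟩ :=
      Subtype.ext (Prod.ext rfl hA2)
    have eB : B = ⟨(B.1.1, nxt hT B.1.1 A.1.1), nxt_adj hT (Ne.symm hne)⟩ :=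
      Subtype.ext (Prod.ext rfl hB2)
    show ({A, B} : Finset (GenericVertex T)) = _
    rw [← eA, ← eB]
lemma nxt_eq_nxt_root (hT : T.IsTree) (r : V) {c y : V} (hne : y ≠ c)
    (hd : T.dist r y ≤ T.dist r c) : nxt hT c y = nxt hT c r := by
  have hcr : c ≠ r := by
    intro he
    rw [he, SimpleGraph.dist_self] at hd
    have h0 : T.dist r y = 0 := by omega
    exact hne (((dist_zero hT).1 h0).symm.trans he.symm)
  set p := nxt hT c r with hpdef
  have hadj : T.Adj c p := nxt_adj hT hcr
  have hdp : T.dist p r + 1 = T.dist c r := nxt_dist hT hcr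
  have dc1 := SimpleGraph.dist_comm (G := T) (u := r) (v := p)
  have dc2 := SimpleGraph.dist_comm (G := T) (u := r) (v := c)
  have dc3 := SimpleGraph.dist_comm (G := T) (u := r) (v := y)
  have hyp : T.dist y p < T.dist y c := by
    by_contra hcon
    have hne2 := adj_dist_ne hT hadj y
    have h2 : T.dist y c < T.dist y p := by omega
    have hcr3 : T.dist r p < T.dist r c := by omega
    have cross := crossing hT hadj h2 hcr3
    have hyc : T.dist y c ≠ 0 := fun h0 => hne ((dist_zero hT).1 h0)
    have dc4 := SimpleGraph.dist_comm (G := T) (u := y) (v := r)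
    have dc5 := SimpleGraph.dist_comm (G := T) (u := p) (v := r)
    omega
  refine (nxt_unique hT hadj ?_).symm
  have dc6 := SimpleGraph.dist_comm (G := T) (u := y) (v := p)
  have dc7 := SimpleGraph.dist_comm (G := T) (u := y) (v := c)
  rcases adj_dist_cases hT hadj y with h | h <;> omega

lemma nxt_eq_of_closer (hT : T.IsTree) {x u xo : V} (hxxo : x ≠ xo)
    (hm : T.dist u (nxt hT x xo) < T.dist u x) : nxt hT x u = nxt hT x xo := by
  refine (nxt_unique hT (nxt_adj hT hxxo) ?_).symm
  have dc1 := SimpleGraph.dist_comm (G := T) (u := u) (v := nxt hT x xo)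
  have dc2 := SimpleGraph.dist_comm (G := T) (u := u) (v := x)
  rcases adj_dist_cases hT (nxt_adj hT hxxo) u with h | h <;> omega

lemma sides_disjoint (hT : T.IsTree) {x y u : V} (hxy : x ≠ y)
    (h1 : T.dist u x < T.dist u (nxt hT x y)) (h2 : T.dist u y < T.dist u (nxt hT y x)) :
    False := by
  have d1 := nxt_dist hT hxy
  have d2 := nxt_dist hT (Ne.symm hxy)
  have dc1 := SimpleGraph.dist_comm (G := T) (u := y) (v := nxt hT x y)
  have dc2 := SimpleGraph.dist_comm (G := T) (u := y) (v := x)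
  have dc3 := SimpleGraph.dist_comm (G := T) (u := x) (v := nxt hT y x)
  have dc4 := SimpleGraph.dist_comm (G := T) (u := x) (v := y)
  have hy1 : T.dist y (nxt hT x y) < T.dist y x := by omega
  have c1 := crossing hT (nxt_adj hT hxy) h1 hy1
  have hx1 : T.dist x (nxt hT y x) < T.dist x y := by omega
  have c2 := crossing hT (nxt_adj hT (Ne.symm hxy)) h2 hx1
  have hpos : T.dist x y ≠ 0 := fun h0 => hxy ((dist_zero hT).1 h0)
  have dc5 := SimpleGraph.dist_comm (G := T) (u := u) (v := y)
  have dc6 := SimpleGraph.dist_comm (G := T) (u := u) (v := x)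
  omega

lemma Sp_inj (hT : T.IsTree) {x y x' y' : V} (hxy : x ≠ y) (hx'y' : x' ≠ y')
    (heq : Sp T hT x y = Sp T hT x' y') : (x = x' ∧ y = y') ∨ (x = y' ∧ y = x') := by
  have hx : (⟨(x, nxt hT x y), nxt_adj hT hxy⟩ : GenericVertex T) ∈ Sp T hT x' y' := by
    rw [← heq, Sp_eq hT hxy]; exact Finset.mem_insert_self _ _
  have hy : (⟨(y, nxt hT y x), nxt_adj hT (Ne.symm hxy)⟩ : GenericVertex T) ∈ Sp T hT x' y' := by
    rw [← heq, Sp_eq hT hxy]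
    exact Finset.mem_insert_of_mem (Finset.mem_singleton_self _)
  rw [Sp_eq hT hx'y', Finset.mem_insert, Finset.mem_singleton] at hx hy
  rcases hx with hx | hx <;> rcases hy with hy | hy
  · exact absurd ((congrArg (fun z => z.1.1) hx).trans
      (congrArg (fun z => z.1.1) hy).symm) hxy
  · exact Or.inl ⟨congrArg (fun z => z.1.1) hx, congrArg (fun z => z.1.1) hy⟩
  · exact Or.inr ⟨congrArg (fun z => z.1.1) hx, congrArg (fun z => z.1.1) hy⟩
  · exact absurd ((congrArg (fun z => z.1.1) hx).trans
      (congrArg (fun z => z.1.1) hy).symm) hxy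

lemma sdiff_card_one {α : Type*} [DecidableEq α] {s t : Finset α} (hs : s.card = 2)
    (ht : t.card = 2) (hne : s ≠ t) (hint : (s ∩ t).Nonempty) : (t \ s).card = 1 := by
  have h1 : (t \ s).card + (t ∩ s).card = t.card := Finset.card_sdiff_add_card_inter t s
  have h2 : 1 ≤ (t ∩ s).card := Finset.card_pos.2 (by rwa [Finset.inter_comm] at hint)
  have h3 : (t ∩ s).card ≠ 2 := by
    intro h4
    have h5 : t ∩ s = t := Finset.eq_of_subset_of_card_le Finset.inter_subset_left (by omega)
    have h6 : t ⊆ s := by rw [← h5]; exact Finset.inter_subset_right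
    exact hne (Finset.eq_of_subset_of_card_le h6 (by omega)).symm
  have h7 : (t ∩ s).card ≤ t.card := Finset.card_le_card Finset.inter_subset_left
  omega

lemma shell_step (hT : T.IsTree) {r u x xo a2 : V}
    (hux : u ≠ x) (hxxo : x ≠ xo) (huxo : u ≠ xo) (ha2u : a2 ≠ u)
    (hda2 : T.dist r a2 ≤ T.dist r u) (hdx : T.dist r x ≤ T.dist r u)
    (hm : T.dist u (nxt hT x xo) < T.dist u x) :
    (Sp T hT x xo \ Sp T hT u x).card = 1 ∧
      Sp T hT u x ⊆ Sp T hT u a2 ∪ Sp T hT x xo := by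
  have e1 : nxt hT u x = nxt hT u a2 := by
    rw [nxt_eq_nxt_root hT r (Ne.symm hux) hdx, nxt_eq_nxt_root hT r ha2u hda2]
  have e2 : nxt hT x u = nxt hT x xo := nxt_eq_of_closer hT hxxo hm
  have hAdj1 : T.Adj u (nxt hT u a2) := by rw [← e1]; exact nxt_adj hT hux
  have hAdj2 : T.Adj x (nxt hT x xo) := nxt_adj hT hxxo
  have hSK : Sp T hT u x =
      {⟨(u, nxt hT u a2), hAdj1⟩, ⟨(x, nxt hT x xo), hAdj2⟩} := by
    rw [Sp_eq hT hux]
    rw [show (⟨(u, nxt hT u x), nxt_adj hT hux⟩ : GenericVertex T)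
        = ⟨(u, nxt hT u a2), hAdj1⟩ from Subtype.ext (Prod.ext rfl e1)]
    rw [show (⟨(x, nxt hT x u), nxt_adj hT (Ne.symm hux)⟩ : GenericVertex T)
        = ⟨(x, nxt hT x xo), hAdj2⟩ from Subtype.ext (Prod.ext rfl e2)]
  constructor
  · have hsd : Sp T hT x xo \ Sp T hT u x = {⟨(xo, nxt hT xo x), nxt_adj hT (Ne.symm hxxo)⟩} := by
      ext z
      rw [Finset.mem_sdiff, Sp_eq hT hxxo, hSK, Finset.mem_insert, Finset.mem_insert,
        Finset.mem_singleton, Finset.mem_singleton]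
      constructor
      · rintro ⟨hz1 | hz1, hz2⟩
        · exact absurd (Or.inr (by rw [hz1])) hz2
        · exact hz1
      · rintro rfl
        refine ⟨Or.inr rfl, ?_⟩
        rintro (hc | hc)
        · exact huxo (congrArg (fun z => z.1.1) hc).symm
        · exact hxxo (congrArg (fun z => z.1.1) hc).symm
    rw [hsd, Finset.card_singleton]
  · intro z hz
    rw [hSK, Finset.mem_insert, Finset.mem_singleton] at hz
    rw [Finset.mem_union]
    rcases hz with rfl | rfl
    · left
      rw [Sp_eq hT (Ne.symm ha2u)]
      exact Finset.mem_insert_self _ _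
    · right
      rw [Sp_eq hT hxxo]
      exact Finset.mem_insert_self _ _
lemma part2 (hT : T.IsTree) : StronglyShellable (edgeSets (genericGraph T)) := by
  obtain ⟨r⟩ := hT.isConnected.nonempty
  have h1 : IsTotal V (fun a b => T.dist r b ≤ T.dist r a) := ⟨fun a b => le_total _ _⟩
  have h2 : IsTrans V (fun a b => T.dist r b ≤ T.dist r a) :=
    ⟨fun a b c hab hbc => le_trans hbc hab⟩
  set vl := List.insertionSort (fun a b => T.dist r b ≤ T.dist r a) Finset.univ.toList with hvl
  have hperm : vl.Perm Finset.univ.toList := List.perm_insertionSort _ _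
  have hnodup : vl.Nodup := hperm.nodup_iff.2 (Finset.nodup_toList _)
  have hsorted : vl.Pairwise (fun a b => T.dist r b ≤ T.dist r a) := List.pairwise_insertionSort _ _
  have hmemvl : ∀ x : V, x ∈ vl := fun x => hperm.mem_iff.2 (by simp)
  set n := vl.length with hn
  have hp1 : IsTotal (Fin n × Fin n) (fun p q => p.1 ≤ q.1) := ⟨fun a b => le_total _ _⟩
  have hp2 : IsTrans (Fin n × Fin n) (fun p q => p.1 ≤ q.1) := ⟨fun a b c => le_trans⟩
  set pl0 := ((List.finRange n) ×ˢ (List.finRange n)).filter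
    (fun p => decide (p.1 < p.2)) with hpl0
  set pl := List.insertionSort (fun p q : Fin n × Fin n => p.1 ≤ q.1) pl0 with hpl
  have hplperm : pl.Perm pl0 := List.perm_insertionSort _ _
  have hpl0nodup : pl0.Nodup :=
    ((List.nodup_finRange n).product (List.nodup_finRange n)).filter _
  have hplnodup : pl.Nodup := hplperm.nodup_iff.2 hpl0nodup
  have hplsorted : pl.Pairwise (fun p q : Fin n × Fin n => p.1 ≤ q.1) :=
    List.pairwise_insertionSort _ _
  have hplmem : ∀ p : Fin n × Fin n, p.1 < p.2 → p ∈ pl := by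
    intro p hp
    rw [hplperm.mem_iff, hpl0, List.mem_filter]
    exact ⟨by rw [List.mem_product]; exact ⟨List.mem_finRange _, List.mem_finRange _⟩,
      by simpa using hp⟩
  have hplmem' : ∀ p ∈ pl, p.1 < p.2 := by
    intro p hp
    rw [hplperm.mem_iff, hpl0, List.mem_filter] at hp
    simpa using hp.2
  have getne : ∀ {i j : Fin n}, i ≠ j → vl.get i ≠ vl.get j := by
    intro i j hij he
    exact hij ((List.Nodup.get_inj_iff hnodup).1 he)
  set f : Fin n × Fin n → Finset (GenericVertex T) :=
    (fun p => Sp T hT (vl.get p.1) (vl.get p.2)) with hf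
  have hmapnodup : (pl.map f).Nodup := by
    apply List.Nodup.map_on _ hplnodup
    intro p hp q hq hfeq
    have hpd := hplmem' p hp
    have hqd := hplmem' q hq
    rcases Sp_inj hT (getne hpd.ne) (getne hqd.ne) hfeq with ⟨e1, e2⟩ | ⟨e1, e2⟩
    · exact Prod.ext ((List.Nodup.get_inj_iff hnodup).1 e1)
        ((List.Nodup.get_inj_iff hnodup).1 e2)
    · exfalso
      have g1 : p.1 = q.2 := (List.Nodup.get_inj_iff hnodup).1 e1
      have g2 : p.2 = q.1 := (List.Nodup.get_inj_iff hnodup).1 e2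
      rw [g1, g2] at hpd
      exact absurd hqd (not_lt.2 (le_of_lt hpd))
  have htofin : (pl.map f).toFinset = edgeSets (genericGraph T) := by
    ext e
    simp only [List.mem_toFinset, List.mem_map]
    constructor
    · rintro ⟨p, hp, rfl⟩
      exact Sp_mem_edgeSets hT (getne (hplmem' p hp).ne)
    · intro he
      obtain ⟨x, y, hxy, rfl⟩ := mem_edgeSets_iff_Sp hT he
      obtain ⟨a, ha⟩ := List.mem_iff_get.1 (hmemvl x)
      obtain ⟨b, hb⟩ := List.mem_iff_get.1 (hmemvl y)
      have hab : a ≠ b := by rintro rfl; exact hxy (ha.symm.trans hb)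
      rcases lt_or_gt_of_ne hab with h | h
      · exact ⟨(a, b), hplmem _ h, by rw [hf]; simp only; rw [ha, hb]⟩
      · exact ⟨(b, a), hplmem _ h, by rw [hf]; simp only; rw [ha, hb, Sp_comm]⟩
  refine ⟨pl.map f, hmapnodup, htofin, ?_⟩
  intro i j hij
  have hlen : (pl.map f).length = pl.length := List.length_map _
  set I : Fin pl.length := Fin.cast hlen i with hI
  set J : Fin pl.length := Fin.cast hlen j with hJ
  have hIJ : I < J := hij
  set P := pl.get I with hP
  set Q := pl.get J with hQ
  have hgeti : (pl.map f).get i = f P := by simp [List.get_map, hI, hP]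
  have hgetj : (pl.map f).get j = f Q := by simp [List.get_map, hJ, hQ]
  have hPmem : P ∈ pl := by rw [hP]; exact pl.get_mem _
  have hQmem : Q ∈ pl := by rw [hQ]; exact pl.get_mem _
  have hPlt : P.1 < P.2 := hplmem' _ hPmem
  have hQlt : Q.1 < Q.2 := hplmem' _ hQmem
  have hfst : P.1 ≤ Q.1 := List.Pairwise.rel_get_of_lt hplsorted hIJ
  by_cases hint : (f P ∩ f Q).Nonempty
  · refine ⟨i, hij, ?_, ?_, ?_⟩
    · rw [hgeti, hgetj]
      have hne2 : f P ≠ f Q := by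
        intro he
        have : i = j := (List.Nodup.get_inj_iff hmapnodup).1 (by rw [hgeti, hgetj]; exact he)
        rw [this] at hij
        exact lt_irrefl _ hij
      exact sdiff_card_one (Sp_card hT (getne hPlt.ne)) (Sp_card hT (getne hQlt.ne)) hne2 hint
    · rw [hgeti]
      exact Finset.inter_subset_left
    · rw [hgeti]
      exact Finset.subset_union_left
  · have hdisj : f P ∩ f Q = ∅ := Finset.not_nonempty_iff_eq_empty.1 hint
    set u := vl.get P.1 with hu
    set A2 := vl.get P.2 with hA2
    set B1 := vl.get Q.1 with hB1
    set B2 := vl.get Q.2 with hB2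
    have hA2u : A2 ≠ u := getne hPlt.ne'
    have hB12 : B1 ≠ B2 := getne hQlt.ne
    have hdA2 : T.dist r A2 ≤ T.dist r u := List.Pairwise.rel_get_of_lt hsorted hPlt
    have hQ1gt : P.1 < Q.1 := by
      rcases lt_or_eq_of_le hfst with h | h
      · exact h
      · exfalso
        have hdB2' : T.dist r B2 ≤ T.dist r B1 := List.Pairwise.rel_get_of_lt hsorted hQlt
        have hub1 : u = B1 := congrArg vl.get h
        have he1 : nxt hT u A2 = nxt hT u r := nxt_eq_nxt_root hT r hA2u hdA2
        have he2 : nxt hT B1 B2 = nxt hT B1 r :=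
          nxt_eq_nxt_root hT r (getne hQlt.ne') hdB2'
        apply hint
        refine ⟨⟨(u, nxt hT u A2), nxt_adj hT (Ne.symm hA2u)⟩, ?_⟩
        rw [Finset.mem_inter]
        constructor
        · rw [hf]; simp only
          rw [Sp_eq hT (Ne.symm hA2u)]
          exact Finset.mem_insert_self _ _
        · rw [hf]; simp only
          rw [Sp_eq hT hB12]
          have hval : nxt hT u A2 = nxt hT B1 B2 := by
            rw [he1, he2]
            exact congrArg (fun t => nxt hT t r) hub1
          have hz : (⟨(u, nxt hT u A2), nxt_adj hT (Ne.symm hA2u)⟩ : GenericVertex T)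
              = ⟨(B1, nxt hT B1 B2), nxt_adj hT hB12⟩ :=
            Subtype.ext (Prod.ext hub1 hval)
          exact Finset.mem_insert.2 (Or.inl hz)
    have hB1u : B1 ≠ u := getne hQ1gt.ne'
    have hB2u : B2 ≠ u := getne (hQ1gt.trans hQlt).ne'
    have hdB1 : T.dist r B1 ≤ T.dist r u := List.Pairwise.rel_get_of_lt hsorted hQ1gt
    have hdB2 : T.dist r B2 ≤ T.dist r u :=
      List.Pairwise.rel_get_of_lt hsorted (hQ1gt.trans hQlt)
    have hchoice : T.dist u (nxt hT B1 B2) < T.dist u B1 ∨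
        T.dist u (nxt hT B2 B1) < T.dist u B2 := by
      by_contra hcon
      push_neg at hcon
      have hne1 := adj_dist_ne hT (nxt_adj hT hB12) u
      have hne2 := adj_dist_ne hT (nxt_adj hT (Ne.symm hB12)) u
      have hc1 := hcon.1
      have hc2 := hcon.2
      exact sides_disjoint hT hB12 (lt_of_le_of_ne hc1 hne1) (lt_of_le_of_ne hc2 hne2)
    rcases hchoice with hm | hm
    · obtain ⟨K, hK⟩ := List.mem_iff_get.1 (hplmem (P.1, Q.1) hQ1gt)
      have hKJ : K < J := by
        rcases lt_trichotomy K J with h | h | h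
        · exact h
        · exfalso
          rw [h, ← hQ] at hK
          exact hQ1gt.ne' (by rw [hK])
        · exfalso
          have hrel := List.Pairwise.rel_get_of_lt hplsorted h
          rw [hK] at hrel
          exact absurd hrel (not_le.2 hQ1gt)
      refine ⟨⟨K.1, by rw [hlen]; exact K.2⟩, by exact hKJ, ?_, ?_, ?_⟩
      · rw [hgetj]
        have hgetk : (pl.map f).get ⟨K.1, by rw [hlen]; exact K.2⟩ = Sp T hT u B1 := by
          simp only [List.get_map]
          rw [show pl.get ⟨K.1, K.2⟩ = (P.1, Q.1) from hK]
        rw [hgetk]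
        exact (shell_step hT (Ne.symm hB1u) hB12 (Ne.symm hB2u) hA2u hdA2 hdB1 hm).1
      · rw [hgeti, hgetj, hdisj]
        exact Finset.empty_subset _
      · rw [hgeti, hgetj]
        have hgetk : (pl.map f).get ⟨K.1, by rw [hlen]; exact K.2⟩ = Sp T hT u B1 := by
          simp only [List.get_map]
          rw [show pl.get ⟨K.1, K.2⟩ = (P.1, Q.1) from hK]
        rw [hgetk]
        exact (shell_step hT (Ne.symm hB1u) hB12 (Ne.symm hB2u) hA2u hdA2 hdB1 hm).2
    · obtain ⟨K, hK⟩ := List.mem_iff_get.1 (hplmem (P.1, Q.2) (hQ1gt.trans hQlt))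
      have hKJ : K < J := by
        rcases lt_trichotomy K J with h | h | h
        · exact h
        · exfalso
          rw [h, ← hQ] at hK
          exact hQ1gt.ne' (by rw [hK])
        · exfalso
          have hrel := List.Pairwise.rel_get_of_lt hplsorted h
          rw [hK] at hrel
          exact absurd hrel (not_le.2 hQ1gt)
      have hcomm : f Q = Sp T hT B2 B1 := by
        rw [hf]; simp only; rw [Sp_comm]
      refine ⟨⟨K.1, by rw [hlen]; exact K.2⟩, by exact hKJ, ?_, ?_, ?_⟩
      · rw [hgetj, hcomm]
        have hgetk : (pl.map f).get ⟨K.1, by rw [hlen]; exact K.2⟩ = Sp T hT u B2 := by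
          simp only [List.get_map]
          rw [show pl.get ⟨K.1, K.2⟩ = (P.1, Q.2) from hK]
        rw [hgetk]
        exact (shell_step hT (Ne.symm hB2u) (Ne.symm hB12) (Ne.symm hB1u) hA2u hdA2 hdB2 hm).1
      · rw [hgeti, hgetj, hdisj]
        exact Finset.empty_subset _
      · rw [hgeti, hgetj, hcomm]
        have hgetk : (pl.map f).get ⟨K.1, by rw [hlen]; exact K.2⟩ = Sp T hT u B2 := by
          simp only [List.get_map]
          rw [show pl.get ⟨K.1, K.2⟩ = (P.1, Q.2) from hK]
        rw [hgetk]
        exact (shell_step hT (Ne.symm hB2u) (Ne.symm hB12) (Ne.symm hB1u) hA2u hdA2 hdB2 hm).2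

end GenShell

/-- For any tree T, the independence complex of the generic graph G_T is strongly shellable
(its facets are the maximal independent sets); together with G_T being ESS, G_T is
bi-strongly shellable. -/
theorem stmt15 {V : Type*} [Fintype V] [DecidableEq V] (T : SimpleGraph V) [DecidableRel T.Adj]
    (hT : T.IsTree) :
    StronglyShellable (Finset.univ.filter fun s : Finset (GenericVertex T) =>
        (∀ a ∈ s, ∀ b ∈ s, ¬ (genericGraph T).Adj a b) ∧
        (∀ t : Finset (GenericVertex T),
          (∀ a ∈ t, ∀ b ∈ t, ¬ (genericGraph T).Adj a b) → s ⊆ t → s = t)) ∧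
    StronglyShellable (edgeSets (genericGraph T)) :=
  ⟨GenShell.part1 hT, GenShell.part2 hT⟩
end

section
/- Let G be an edgewise strongly shellable bipartite graph, w a vertex of G, and i ∈ {1,2}. Then for any two vertices x, y at distance i from w, the upward neighborhoods satisfy uN_w(x) ⊆ uN_w(y) or uN_w(y) ⊆ uN_w(x), where uN_w(x) = N(x) ∩ D(w, i+1) and D(w,k) is the set of vertices at distance k from w. -/
open scoped Classical

lemma mem_edgeSets {V : Type*} [Fintype V] [DecidableEq V] (G : SimpleGraph V)
    [DecidableRel G.Adj] (s : Finset V) :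
    s ∈ edgeSets G ↔ ∃ u v, G.Adj u v ∧ s = {u, v} := by
  unfold edgeSets
  simp only [Finset.mem_image, SimpleGraph.mem_edgeFinset]
  constructor
  · rintro ⟨e, he, rfl⟩
    induction e using Sym2.ind with
    | _ u v =>
      rw [SimpleGraph.mem_edgeSet] at he
      exact ⟨u, v, he, rfl⟩
  · rintro ⟨u, v, h, rfl⟩
    exact ⟨s(u, v), (SimpleGraph.mem_edgeSet G).mpr h, rfl⟩

lemma walkParity {V : Type*} {G : SimpleGraph V} (C : G.Coloring (Fin 2)) {u v : V}
    (p : G.Walk u v) : (C u = C v) ↔ Even p.length := by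
  induction p with
  | nil => simp
  | @cons a b c h p ih =>
    have hne : C a ≠ C b := C.valid h
    rw [SimpleGraph.Walk.length_cons, Nat.even_add_one, ← ih]
    revert hne
    have key : ∀ r s t : Fin 2, r ≠ s → ((r = t) ↔ ¬ s = t) := by decide
    exact key (C a) (C b) (C c)


lemma classifyEdge {V : Type*} {G : SimpleGraph V}
    (x z y z' p q : V) (hAdj : G.Adj p q)
    (hxyadj : ¬ G.Adj x y) (hxz' : ¬ G.Adj x z') (hyz : ¬ G.Adj y z) (hzz' : ¬ G.Adj z z')
    (hp : p = x ∨ p = z ∨ p = y ∨ p = z')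
    (hq : q = x ∨ q = z ∨ q = y ∨ q = z') [DecidableEq V] :
    ({p, q} : Finset V) = {x, z} ∨ ({p, q} : Finset V) = {y, z'} := by
  rcases hp with rfl | rfl | rfl | rfl <;> rcases hq with rfl | rfl | rfl | rfl <;>
    first
    | exact absurd hAdj G.irrefl
    | exact absurd hAdj hxyadj
    | exact absurd hAdj.symm hxyadj
    | exact absurd hAdj hxz'
    | exact absurd hAdj.symm hxz'
    | exact absurd hAdj hyz
    | exact absurd hAdj.symm hyz
    | exact absurd hAdj hzz'
    | exact absurd hAdj.symm hzz'
    | exact Or.inl rfl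
    | exact Or.inl (Finset.pair_comm _ _)
    | exact Or.inr rfl
    | exact Or.inr (Finset.pair_comm _ _)

set_option maxHeartbeats 2000000

/-- In an ESS bipartite graph, for any vertex w, i ∈ {1,2}, and vertices x, y at distance i
from w, the upward neighborhoods uN_w(x) = N(x) ∩ D(w,i+1) are comparable by inclusion. -/
theorem stmt16 {V : Type*} [Fintype V] [DecidableEq V] (G : SimpleGraph V)
    [DecidableRel G.Adj] (hESS : StronglyShellable (edgeSets G)) (hbip : G.Colorable 2)
    (w : V) (i : ℕ) (hi : i = 1 ∨ i = 2) (x y : V)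
    (hx : G.dist w x = i) (hy : G.dist w y = i) :
    {z : V | G.Adj x z ∧ G.dist w z = i + 1} ⊆ {z : V | G.Adj y z ∧ G.dist w z = i + 1} ∨
    {z : V | G.Adj y z ∧ G.dist w z = i + 1} ⊆ {z : V | G.Adj x z ∧ G.dist w z = i + 1} := by
  classical
  obtain ⟨C⟩ := hbip
  by_cases hxy : x = y
  · subst hxy; exact Or.inl subset_rfl
  by_contra hcon
  push_neg at hcon
  obtain ⟨h1, h2⟩ := hcon
  rw [Set.not_subset] at h1 h2
  obtain ⟨z, hzA, hzB⟩ := h1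
  obtain ⟨z', hz'A, hz'B⟩ := h2
  simp only [Set.mem_setOf_eq] at hzA hzB hz'A hz'B
  have hxz : G.Adj x z := hzA.1
  have hzd : G.dist w z = i + 1 := hzA.2
  have hyz' : G.Adj y z' := hz'A.1
  have hz'd : G.dist w z' = i + 1 := hz'A.2
  have hyz : ¬ G.Adj y z := fun h => hzB ⟨h, hzd⟩
  have hxz' : ¬ G.Adj x z' := fun h => hz'B ⟨h, hz'd⟩
  have hi1 : i ≠ 0 := by omega
  -- parity / coloring facts
  have parity : ∀ v : V, G.dist w v ≠ 0 → ((C w = C v) ↔ Even (G.dist w v)) := by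
    intro v hv
    obtain ⟨p, hp⟩ := SimpleGraph.exists_walk_of_dist_ne_zero hv
    rw [← hp]
    exact walkParity C p
  have key2 : ∀ r s t : Fin 2, ((r = s) ↔ (r = t)) → s = t := by decide
  have hCxy : C x = C y := by
    apply key2 (C w)
    rw [parity x (by omega), parity y (by omega), hx, hy]
  have hCzz' : C z = C z' := by
    apply key2 (C w)
    rw [parity z (by omega), parity z' (by omega), hzd, hz'd]
  have hxyadj : ¬ G.Adj x y := fun h => C.valid h hCxy
  have hzz' : ¬ G.Adj z z' := fun h => C.valid h hCzz'
  -- distinctness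
  have hxz'ne : x ≠ z' := fun h => by rw [h, hz'd] at hx; omega
  have hyzne : y ≠ z := fun h => by rw [h, hzd] at hy; omega
  have hzz'ne : z ≠ z' := fun h => hyz (h ▸ hyz')
  have hxzne : x ≠ z := G.ne_of_adj hxz
  have hyz'ne : y ≠ z' := G.ne_of_adj hyz'
  have hE1 : ({x, z} : Finset V) ∈ edgeSets G := (mem_edgeSets G _).mpr ⟨x, z, hxz, rfl⟩
  have hE2 : ({y, z'} : Finset V) ∈ edgeSets G := (mem_edgeSets G _).mpr ⟨y, z', hyz', rfl⟩
  have hE1E2 : ({x, z} : Finset V) ≠ {y, z'} := by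
    intro h
    have : x ∈ ({y, z'} : Finset V) := h ▸ Finset.mem_insert_self x {z}
    simp only [Finset.mem_insert, Finset.mem_singleton] at this
    tauto
  have hdisj : Disjoint ({x, z} : Finset V) ({y, z'} : Finset V) := by
    rw [Finset.disjoint_left]
    intro a ha hb
    simp only [Finset.mem_insert, Finset.mem_singleton] at ha hb
    rcases ha with rfl | rfl <;> rcases hb with rfl | rfl <;> tauto
  have hE1card : ({x, z} : Finset V).card = 2 := Finset.card_pair hxzne
  have hE2card : ({y, z'} : Finset V).card = 2 := Finset.card_pair hyz'ne
  obtain ⟨l, hnd, hto, hprop⟩ := hESS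
  have hmem1 : ({x, z} : Finset V) ∈ l := by rw [← List.mem_toFinset, hto]; exact hE1
  have hmem2 : ({y, z'} : Finset V) ∈ l := by rw [← List.mem_toFinset, hto]; exact hE2
  obtain ⟨a, ha⟩ := List.mem_iff_get.mp hmem1
  obtain ⟨b, hb⟩ := List.mem_iff_get.mp hmem2
  have hab : a ≠ b := fun h => hE1E2 (by rw [← ha, ← hb, h])
  have classify : ∀ k : Fin l.length, l.get k ⊆ {x, z} ∪ {y, z'} →
      l.get k = {x, z} ∨ l.get k = {y, z'} := by
    intro k hsub
    have hk : l.get k ∈ edgeSets G := by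
      rw [← hto, List.mem_toFinset]; exact l.get_mem k
    obtain ⟨p, q, hAdj, hpq⟩ := (mem_edgeSets G _).mp hk
    rw [hpq] at hsub ⊢
    have hp : p = x ∨ p = z ∨ p = y ∨ p = z' := by
      have := hsub (Finset.mem_insert_self p {q})
      simp only [Finset.mem_union, Finset.mem_insert, Finset.mem_singleton] at this
      rw [or_assoc] at this; exact this
    have hq : q = x ∨ q = z ∨ q = y ∨ q = z' := by
      have := hsub (Finset.mem_insert_of_mem (Finset.mem_singleton_self q))
      simp only [Finset.mem_union, Finset.mem_insert, Finset.mem_singleton] at this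
      rw [or_assoc] at this; exact this
    exact classifyEdge x z y z' p q hAdj hxyadj hxz' hyz hzz' hp hq
  rcases lt_or_gt_of_ne hab with hlt | hlt
  · obtain ⟨k, _, hcard, _, hsub⟩ := hprop a b hlt
    simp only [ha, hb] at hsub hcard
    rcases classify k hsub with hk | hk <;> rw [hk] at hcard
    · rw [Finset.sdiff_eq_self_of_disjoint hdisj.symm, hE2card] at hcard; omega
    · rw [Finset.sdiff_self, Finset.card_empty] at hcard; omega
  · obtain ⟨k, _, hcard, _, hsub⟩ := hprop b a hlt
    simp only [ha, hb] at hsub hcard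
    rw [Finset.union_comm] at hsub
    rcases classify k hsub with hk | hk <;> rw [hk] at hcard
    · rw [Finset.sdiff_self, Finset.card_empty] at hcard; omega
    · rw [Finset.sdiff_eq_self_of_disjoint hdisj, hE1card] at hcard; omega
end

section
/- Let G be an edgewise strongly shellable bipartite graph and w a vertex of G. If x is a vertex at distance 2 from w whose upward neighborhood uN_w(x) = N(x) ∩ D(w,3) is nonempty, then x is adjacent to every vertex at distance 1 from w, i.e., dN_w(x) = D(w,1). -/
open scoped Classical

lemma mem_edgeSets_of_adj {V : Type*} [Fintype V] [DecidableEq V] (G : SimpleGraph V)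
    [DecidableRel G.Adj] {u v : V} (h : G.Adj u v) : ({u, v} : Finset V) ∈ edgeSets G := by
  refine Finset.mem_image.mpr ⟨s(u, v), ?_, rfl⟩
  simpa [SimpleGraph.mem_edgeFinset] using h

lemma edgeSets_spec {V : Type*} [Fintype V] [DecidableEq V] (G : SimpleGraph V)
    [DecidableRel G.Adj] {e : Finset V} (h : e ∈ edgeSets G) :
    ∃ u v, G.Adj u v ∧ e = {u, v} := by
  obtain ⟨s, hs, rfl⟩ := Finset.mem_image.mp h
  induction s using Sym2.inductionOn with
  | hf u v => exact ⟨u, v, by simpa [SimpleGraph.mem_edgeFinset] using hs, rfl⟩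

/-- Key ESS consequence: two disjoint edges are joined by an edge. -/
lemma joined_of_disjoint {V : Type*} [Fintype V] [DecidableEq V] (G : SimpleGraph V)
    [DecidableRel G.Adj] (hESS : StronglyShellable (edgeSets G))
    {e f : Finset V} (he : e ∈ edgeSets G) (hf : f ∈ edgeSets G)
    (hd : ∀ a ∈ e, a ∉ f) :
    ∃ a ∈ e, ∃ b ∈ f, G.Adj a b := by
  obtain ⟨l, hnd, hto, hcond⟩ := hESS
  have he' : e ∈ l := by rw [← List.mem_toFinset, hto]; exact he
  have hf' : f ∈ l := by rw [← List.mem_toFinset, hto]; exact hf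
  obtain ⟨i, hi⟩ := List.mem_iff_get.mp he'
  obtain ⟨j, hj⟩ := List.mem_iff_get.mp hf'
  -- general claim for ordered pair
  have key : ∀ (i j : Fin l.length), (i : ℕ) < (j : ℕ) →
      ∀ e f : Finset V, l.get i = e → l.get j = f → (∀ a ∈ e, a ∉ f) →
      f ∈ edgeSets G →
      ∃ a ∈ e, ∃ b ∈ f, G.Adj a b := by
    intro i j hij e f hi hj hd hf
    obtain ⟨k, hkj, hcard, hsub1, hsub2⟩ := hcond i j hij
    rw [hj] at hcard
    rw [hi, hj] at hsub2
    have hk : l.get k ∈ edgeSets G := by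
      rw [← hto]; exact List.mem_toFinset.mpr (l.get_mem k)
    obtain ⟨a, b, hab, hk_eq⟩ := edgeSets_spec G hk
    rw [hk_eq] at hcard hsub2
    obtain ⟨u, v, huv, hf_eq⟩ := edgeSets_spec G hf
    have hfcard : f.card = 2 := by rw [hf_eq]; exact Finset.card_pair huv.ne
    have hinter : (f ∩ ({a, b} : Finset V)).card = 1 := by
      have := Finset.card_sdiff_add_card_inter f ({a, b} : Finset V)
      omega
    obtain ⟨c, hc⟩ := Finset.card_eq_one.mp hinter
    have hcm : c ∈ f ∩ ({a, b} : Finset V) := hc ▸ Finset.mem_singleton_self c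
    have hcf : c ∈ f := (Finset.mem_inter.mp hcm).1
    have hck : c ∈ ({a, b} : Finset V) := (Finset.mem_inter.mp hcm).2
    rcases Finset.mem_insert.mp hck with hca | hcb
    · -- c = a ∈ f, show b ∈ e
      have hbf : b ∉ f := by
        intro hbf
        have : b ∈ f ∩ ({a, b} : Finset V) := Finset.mem_inter.mpr ⟨hbf, by simp⟩
        rw [hc] at this
        have : b = a := hca ▸ Finset.mem_singleton.mp this
        exact hab.ne this.symm
      have hbe : b ∈ e := by
        have := hsub2 (by simp : b ∈ ({a, b} : Finset V))
        rcases Finset.mem_union.mp this with h | h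
        · exact h
        · exact absurd h hbf
      exact ⟨b, hbe, c, hcf, hca ▸ hab.symm⟩
    · have hcb : c = b := Finset.mem_singleton.mp hcb
      have haf : a ∉ f := by
        intro haf
        have : a ∈ f ∩ ({a, b} : Finset V) := Finset.mem_inter.mpr ⟨haf, by simp⟩
        rw [hc] at this
        have : a = b := hcb ▸ Finset.mem_singleton.mp this
        exact hab.ne this
      have hae : a ∈ e := by
        have := hsub2 (by simp : a ∈ ({a, b} : Finset V))
        rcases Finset.mem_union.mp this with h | h
        · exact h
        · exact absurd h haf
      exact ⟨a, hae, c, hcf, hcb ▸ hab⟩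
  rcases lt_trichotomy (i : ℕ) (j : ℕ) with h | h | h
  · exact key i j h e f hi hj hd hf
  · exfalso
    have : e = f := by rw [← hi, ← hj]; congr 1; exact Fin.ext h
    obtain ⟨u, v, huv, he_eq⟩ := edgeSets_spec G he
    exact hd u (he_eq ▸ by simp) (this ▸ he_eq ▸ by simp)
  · obtain ⟨b, hb, a, ha, hadj⟩ := key j i h f e hj hi (fun a haf hae => hd a hae haf) he
    exact ⟨a, ha, b, hb, hadj.symm⟩

/-- In an ESS bipartite graph, if x is at distance 2 from w and has a neighbor at distance 3
from w, then x is adjacent to every vertex at distance 1 from w: dN_w(x) = D(w,1). -/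
theorem stmt17 {V : Type*} [Fintype V] [DecidableEq V] (G : SimpleGraph V)
    [DecidableRel G.Adj] (hESS : StronglyShellable (edgeSets G)) (hbip : G.Colorable 2)
    (w x : V) (hx : G.dist w x = 2)
    (hup : ∃ z : V, G.Adj x z ∧ G.dist w z = 3) :
    {y : V | G.Adj x y ∧ G.dist w y = 1} = {y : V | G.dist w y = 1} := by
  obtain ⟨z, hxz, hz⟩ := hup
  ext y
  simp only [Set.mem_setOf_eq, and_iff_right_iff_imp]
  intro hy
  have hwy : G.Adj w y := SimpleGraph.dist_eq_one_iff_adj.mp hy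
  -- edges {w,y} and {x,z} are disjoint
  have hwx : w ≠ x := by rintro rfl; simp [SimpleGraph.dist_self] at hx
  have hwz : w ≠ z := by rintro rfl; simp [SimpleGraph.dist_self] at hz
  have hyx : y ≠ x := by rintro rfl; rw [hy] at hx; omega
  have hyz : y ≠ z := by rintro rfl; rw [hy] at hz; omega
  have hdisj : ∀ a ∈ ({w, y} : Finset V), a ∉ ({x, z} : Finset V) := by
    intro a ha hb
    simp only [Finset.mem_insert, Finset.mem_singleton] at ha hb
    rcases ha with rfl | rfl <;> rcases hb with rfl | rfl <;>
      first | exact hwx rfl | exact hwz rfl | exact hyx rfl | exact hyz rfl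
  obtain ⟨a, ha, b, hb, hab⟩ := joined_of_disjoint G hESS
    (mem_edgeSets_of_adj G hwy) (mem_edgeSets_of_adj G hxz) hdisj
  simp only [Finset.mem_insert, Finset.mem_singleton] at ha hb
  rcases ha with ha | ha <;> rcases hb with hb | hb <;> rw [ha, hb] at hab
  · -- Adj w x : dist w x ≤ 1
    exfalso
    have := SimpleGraph.dist_eq_one_iff_adj.mpr hab
    omega
  · exfalso
    have := SimpleGraph.dist_eq_one_iff_adj.mpr hab
    omega
  · exact hab.symm
  · -- Adj y z with dist w y = 1 : dist w z ≤ 2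
    exfalso
    have h2 := SimpleGraph.dist_le (hwy.toWalk.concat hab)
    simp [SimpleGraph.Walk.length_concat] at h2
    omega
end

section
/- Let G be a connected edgewise strongly shellable bipartite graph without isolated vertices. Then there exists a vertex w' of G such that every vertex of G has distance at most 2 from w'. -/
open scoped Classical

lemma mem_edgeSets_iff {V : Type*} [Fintype V] [DecidableEq V] (G : SimpleGraph V)
    [DecidableRel G.Adj] (g : Finset V) :
    g ∈ edgeSets G ↔ ∃ u v, G.Adj u v ∧ g = {u, v} := by
  unfold edgeSets
  simp only [Finset.mem_image, SimpleGraph.mem_edgeFinset]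
  constructor
  · rintro ⟨s, hs, rfl⟩
    induction s using Sym2.ind with
    | _ u v =>
      rw [SimpleGraph.mem_edgeSet] at hs
      exact ⟨u, v, hs, by simp⟩
  · rintro ⟨u, v, h, rfl⟩
    exact ⟨s(u, v), by rwa [SimpleGraph.mem_edgeSet], by simp⟩

lemma fin2aux (x y z : Fin 2) (h1 : x ≠ y) (h2 : z ≠ y) : x = z := by
  revert x y z; decide

lemma cross_aux {V : Type*} [Fintype V] [DecidableEq V] (G : SimpleGraph V)
    [DecidableRel G.Adj] {e f : Finset V} (hf2 : f.card = 2) (hdisj : Disjoint e f)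
    {g : Finset V} (hg : g ∈ edgeSets G) (hcard : (f \ g).card = 1) (hsub : g ⊆ e ∪ f) :
    ∃ x ∈ e, ∃ y ∈ f, G.Adj x y := by
  obtain ⟨u, v, huv, rfl⟩ := (mem_edgeSets_iff G g).1 hg
  have hcg : ({u, v} : Finset V).card = 2 := Finset.card_pair huv.ne
  have hadd : (f \ ({u, v} : Finset V)).card + (f ∩ ({u, v} : Finset V)).card = f.card :=
    Finset.card_sdiff_add_card_inter f _
  have h1 : (f ∩ ({u, v} : Finset V)).card = 1 := by omega
  obtain ⟨y₀, hy₀⟩ := Finset.card_eq_one.1 h1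
  have hy₀m : y₀ ∈ f ∩ ({u, v} : Finset V) := by rw [hy₀]; exact Finset.mem_singleton_self _
  have hy₀f : y₀ ∈ f := (Finset.mem_inter.1 hy₀m).1
  have hy₀g : y₀ ∈ ({u, v} : Finset V) := (Finset.mem_inter.1 hy₀m).2
  have h2 : (({u, v} : Finset V) \ {y₀}).card = 1 := by
    rw [Finset.card_sdiff_of_subset (Finset.singleton_subset_iff.2 hy₀g), hcg]
    simp
  obtain ⟨x₀, hx₀⟩ := Finset.card_eq_one.1 h2
  have hx₀m : x₀ ∈ ({u, v} : Finset V) \ {y₀} := by rw [hx₀]; exact Finset.mem_singleton_self _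
  have hx₀g : x₀ ∈ ({u, v} : Finset V) := (Finset.mem_sdiff.1 hx₀m).1
  have hx₀ne : x₀ ≠ y₀ := by
    have := (Finset.mem_sdiff.1 hx₀m).2; simpa using this
  have hx₀f : x₀ ∉ f := by
    intro hxf
    have : x₀ ∈ f ∩ ({u, v} : Finset V) := Finset.mem_inter.2 ⟨hxf, hx₀g⟩
    rw [hy₀] at this
    exact hx₀ne (Finset.mem_singleton.1 this)
  have hx₀e : x₀ ∈ e := by
    rcases Finset.mem_union.1 (hsub hx₀g) with h | h
    · exact h
    · exact absurd h hx₀f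
  refine ⟨x₀, hx₀e, y₀, hy₀f, ?_⟩
  have hxor : x₀ = u ∨ x₀ = v := by simpa using hx₀g
  have hyor : y₀ = u ∨ y₀ = v := by simpa using hy₀g
  rcases hxor with rfl | rfl <;> rcases hyor with rfl | rfl
  · exact absurd rfl hx₀ne
  · exact huv
  · exact huv.symm
  · exact absurd rfl hx₀ne

lemma cross {V : Type*} [Fintype V] [DecidableEq V] (G : SimpleGraph V)
    [DecidableRel G.Adj] (hESS : StronglyShellable (edgeSets G)) {a b a' b' : V}
    (hab : G.Adj a b) (hab' : G.Adj a' b')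
    (hd : Disjoint ({a, b} : Finset V) ({a', b'} : Finset V)) :
    ∃ x ∈ ({a, b} : Finset V), ∃ y ∈ ({a', b'} : Finset V), G.Adj x y := by
  obtain ⟨l, hnd, hto, hprop⟩ := hESS
  have he : ({a, b} : Finset V) ∈ l := by
    rw [← List.mem_toFinset, hto]
    exact (mem_edgeSets_iff G _).2 ⟨a, b, hab, rfl⟩
  have hf : ({a', b'} : Finset V) ∈ l := by
    rw [← List.mem_toFinset, hto]
    exact (mem_edgeSets_iff G _).2 ⟨a', b', hab', rfl⟩
  obtain ⟨i, hi⟩ := List.mem_iff_get.1 he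
  obtain ⟨j, hj⟩ := List.mem_iff_get.1 hf
  have hij : i ≠ j := by
    intro h
    subst h
    rw [hi] at hj
    have : a ∈ ({a', b'} : Finset V) := by rw [← hj]; simp
    exact (Finset.disjoint_left.1 hd (by simp) this)
  rcases hij.lt_or_gt with h | h
  · obtain ⟨k, _, hc, _, hs2⟩ := hprop i j h
    rw [hi, hj] at hs2
    rw [hj] at hc
    have hgk : l.get k ∈ edgeSets G := by
      rw [← hto, List.mem_toFinset]; exact l.get_mem _
    exact cross_aux G (Finset.card_pair hab'.ne) hd hgk hc hs2
  · obtain ⟨k, _, hc, _, hs2⟩ := hprop j i h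
    rw [hi, hj] at hs2
    rw [hi] at hc
    have hgk : l.get k ∈ edgeSets G := by
      rw [← hto, List.mem_toFinset]; exact l.get_mem _
    obtain ⟨x, hx, y, hy, hxy⟩ :=
      cross_aux G (Finset.card_pair hab.ne) hd.symm hgk hc hs2
    exact ⟨y, hy, x, hx, hxy.symm⟩

/-- A connected ESS bipartite graph without isolated vertices has a vertex within distance 2
of every vertex. -/
theorem stmt18 {V : Type*} [Fintype V] [DecidableEq V] (G : SimpleGraph V)
    [DecidableRel G.Adj] (hconn : G.Connected) (hESS : StronglyShellable (edgeSets G))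
    (hbip : G.Colorable 2) (hnoiso : ∀ v : V, ∃ u : V, G.Adj v u) :
    ∃ w' : V, ∀ v : V, G.dist w' v ≤ 2 := by
  have C : G.Coloring (Fin 2) := hbip.some
  have hne : Nonempty V := hconn.nonempty
  obtain ⟨v₀⟩ := hne
  obtain ⟨w, -, hw⟩ := Finset.exists_max_image Finset.univ
    (fun v => (G.neighborFinset v).card) ⟨v₀, Finset.mem_univ _⟩
  -- chain property of neighborhoods within a color class
  have hchain : ∀ u u' : V, C u = C u' →
      G.neighborFinset u ⊆ G.neighborFinset u' ∨ G.neighborFinset u' ⊆ G.neighborFinset u := by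
    intro u u' hc
    by_contra hcon
    push_neg at hcon
    obtain ⟨h1, h2⟩ := hcon
    obtain ⟨b, hbu, hbu'⟩ := Finset.not_subset.1 h1
    obtain ⟨b', hb'u', hb'u⟩ := Finset.not_subset.1 h2
    rw [SimpleGraph.mem_neighborFinset] at hbu hb'u'
    have huu' : u ≠ u' := by
      rintro rfl
      exact hbu' (SimpleGraph.mem_neighborFinset _ _ _ |>.2 hbu)
    have hub' : u ≠ b' := by
      rintro rfl
      exact (C.valid hb'u') hc.symm
    have hbu'ne : b ≠ u' := by
      rintro rfl
      exact (C.valid hbu) hc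
    have hbb' : b ≠ b' := by
      rintro rfl
      exact hb'u (SimpleGraph.mem_neighborFinset _ _ _ |>.2 hbu)
    have hd : Disjoint ({u, b} : Finset V) ({u', b'} : Finset V) := by
      rw [Finset.disjoint_left]
      intro x hx hx'
      simp only [Finset.mem_insert, Finset.mem_singleton] at hx hx'
      rcases hx with rfl | rfl <;> rcases hx' with rfl | rfl
      · exact huu' rfl
      · exact hub' rfl
      · exact hbu'ne rfl
      · exact hbb' rfl
    obtain ⟨x, hx, y, hy, hxy⟩ := cross G hESS hbu hb'u' hd
    simp only [Finset.mem_insert, Finset.mem_singleton] at hx hy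
    rcases hx with rfl | rfl <;> rcases hy with rfl | rfl
    · exact (C.valid hxy) hc
    · exact hb'u (SimpleGraph.mem_neighborFinset _ _ _ |>.2 hxy)
    · exact hbu' (SimpleGraph.mem_neighborFinset _ _ _ |>.2 hxy.symm)
    · have h1 : C x ≠ C u := fun h => (C.valid hbu) h.symm
      have h2 : C y ≠ C u := by
        intro h
        exact (C.valid hb'u') (hc.symm.trans h.symm)
      exact (C.valid hxy) (fin2aux _ _ _ h1 h2)
  -- every vertex of opposite color is adjacent to w
  have stepA : ∀ v : V, C v ≠ C w → G.Adj w v := by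
    intro v hv
    obtain ⟨u, hu⟩ := hnoiso v
    have hcu : C u = C w := fin2aux _ (C v) _ (C.valid hu.symm) (Ne.symm hv)
    have hsub : G.neighborFinset u ⊆ G.neighborFinset w := by
      rcases hchain u w hcu with h | h
      · exact h
      · rw [Finset.eq_of_subset_of_card_le h (hw u (Finset.mem_univ u))]
    have : v ∈ G.neighborFinset w := hsub ((SimpleGraph.mem_neighborFinset _ _ _).2 hu.symm)
    exact (SimpleGraph.mem_neighborFinset _ _ _).1 this
  refine ⟨w, fun v => ?_⟩
  by_cases hv : C v = C w
  · by_cases hvw : v = w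
    · subst hvw; simp [SimpleGraph.dist_self]
    · obtain ⟨b, hb⟩ := hnoiso v
      have hbw : C b ≠ C w := by
        intro h
        exact (C.valid hb) (hv.trans h.symm)
      have hwb : G.Adj w b := stepA b hbw
      calc G.dist w v ≤ (SimpleGraph.Walk.cons hwb (SimpleGraph.Walk.cons hb.symm
              SimpleGraph.Walk.nil)).length := SimpleGraph.dist_le _
        _ = 2 := by simp
  · have hwv : G.Adj w v := stepA v hv
    calc G.dist w v ≤ hwv.toWalk.length := SimpleGraph.dist_le _
      _ ≤ 2 := by simp [SimpleGraph.Adj.toWalk]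
end

section
/- A bipartite graph G with vertex parts X = {x_1,…,x_m} and Y = {y_1,…,y_n} and no isolated vertices is edgewise strongly shellable if and only if, after suitable reordering of X and Y, it is a Ferrers graph: whenever {x_i, y_j} ∈ E(G), also {x_r, y_s} ∈ E(G) for all 1 ≤ r ≤ i and 1 ≤ s ≤ j. -/
open scoped Classical

namespace Stmt19

variable {m n : ℕ}

def fpair (p : Fin m × Fin n) : Finset (Fin m ⊕ Fin n) := {Sum.inl p.1, Sum.inr p.2}

lemma fpair_inj : Function.Injective (fpair (m := m) (n := n)) := by
  intro p q h
  have h1 : (Sum.inl p.1 : Fin m ⊕ Fin n) ∈ fpair q := by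
    rw [← h]; simp [fpair]
  have h2 : (Sum.inr p.2 : Fin m ⊕ Fin n) ∈ fpair q := by
    rw [← h]; simp [fpair]
  simp only [fpair, Finset.mem_insert, Finset.mem_singleton] at h1 h2
  rcases h1 with h1 | h1 <;> rcases h2 with h2 | h2 <;>
    simp_all [Prod.ext_iff]

variable (G : SimpleGraph (Fin m ⊕ Fin n)) [DecidableRel G.Adj]

lemma mem_edgeSets
    (hbip : ∀ a b : Fin m ⊕ Fin n, G.Adj a b →
      (a.isLeft = true ∧ b.isRight = true) ∨ (a.isRight = true ∧ b.isLeft = true))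
    (S : Finset (Fin m ⊕ Fin n)) :
    S ∈ edgeSets G ↔ ∃ p : Fin m × Fin n, G.Adj (Sum.inl p.1) (Sum.inr p.2) ∧ S = fpair p := by
  constructor
  · intro h
    simp only [edgeSets, Finset.mem_image] at h
    obtain ⟨e, he, rfl⟩ := h
    induction e using Sym2.ind with
    | _ u v =>
      rw [SimpleGraph.mem_edgeFinset, SimpleGraph.mem_edgeSet] at he
      rcases hbip u v he with ⟨h1, h2⟩ | ⟨h1, h2⟩
      · obtain ⟨a, rfl⟩ := Sum.isLeft_iff.mp h1
        obtain ⟨b, rfl⟩ := Sum.isRight_iff.mp h2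
        exact ⟨(a, b), he, by simp [fpair]⟩
      · obtain ⟨b, rfl⟩ := Sum.isRight_iff.mp h1
        obtain ⟨a, rfl⟩ := Sum.isLeft_iff.mp h2
        exact ⟨(a, b), he.symm, by simp [fpair, Finset.pair_comm]⟩
  · rintro ⟨p, hadj, rfl⟩
    simp only [edgeSets, Finset.mem_image]
    exact ⟨s(Sum.inl p.1, Sum.inr p.2),
      by rw [SimpleGraph.mem_edgeFinset, SimpleGraph.mem_edgeSet]; exact hadj,
      by simp [fpair]⟩

noncomputable def NX (a : Fin m) : Finset (Fin n) :=
  Finset.univ.filter fun b => G.Adj (Sum.inl a) (Sum.inr b)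

noncomputable def NY (b : Fin n) : Finset (Fin m) :=
  Finset.univ.filter fun a => G.Adj (Sum.inl a) (Sum.inr b)

lemma mem_NX {a : Fin m} {b : Fin n} : b ∈ NX G a ↔ G.Adj (Sum.inl a) (Sum.inr b) := by
  simp [NX]

lemma mem_NY {a : Fin m} {b : Fin n} : a ∈ NY G b ↔ G.Adj (Sum.inl a) (Sum.inr b) := by
  simp [NY]

lemma card_fpair (p : Fin m × Fin n) : (fpair p).card = 2 :=
  Finset.card_pair (by simp)

lemma fpair_disjoint {a c : Fin m} {b d : Fin n} (hac : a ≠ c) (hbd : b ≠ d) :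
    Disjoint (fpair (a, b)) (fpair (c, d)) := by
  simp only [fpair, Finset.disjoint_left, Finset.mem_insert, Finset.mem_singleton]
  rintro x (rfl | rfl) <;> simp_all [Sum.inl.injEq, Sum.inr.injEq] <;> tauto

lemma chainX
    (hbip : ∀ a b : Fin m ⊕ Fin n, G.Adj a b →
      (a.isLeft = true ∧ b.isRight = true) ∨ (a.isRight = true ∧ b.isLeft = true))
    (hSS : StronglyShellable (edgeSets G)) (a c : Fin m) :
    NX G a ⊆ NX G c ∨ NX G c ⊆ NX G a := by
  by_contra hcon
  push_neg at hcon
  obtain ⟨b, hb, hb'⟩ := Finset.not_subset.mp hcon.1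
  obtain ⟨d, hd, hd'⟩ := Finset.not_subset.mp hcon.2
  rw [mem_NX] at hb hd
  rw [mem_NX] at hb' hd'
  have hac : a ≠ c := by rintro rfl; exact hb' hb
  have hbd : b ≠ d := by rintro rfl; exact hb' hd
  obtain ⟨l, hnd, hto, hshell⟩ := hSS
  have hE1 : fpair (a, b) ∈ l := by
    rw [← List.mem_toFinset, hto, mem_edgeSets G hbip]
    exact ⟨(a, b), hb, rfl⟩
  have hE2 : fpair (c, d) ∈ l := by
    rw [← List.mem_toFinset, hto, mem_edgeSets G hbip]
    exact ⟨(c, d), hd, rfl⟩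
  have hne : fpair (a, b) ≠ fpair (c, d) := fun h => hac (congrArg Prod.fst (fpair_inj h))
  -- main symmetric argument
  have main : ∀ (i j : Fin l.length), (i : ℕ) < (j : ℕ) →
      (l.get i = fpair (a, b) ∧ l.get j = fpair (c, d)) ∨
      (l.get i = fpair (c, d) ∧ l.get j = fpair (a, b)) → False := by
    intro i j hij hor
    obtain ⟨k, hk, hcard, hsub1, hsub2⟩ := hshell i j hij
    have hkE : l.get k ∈ edgeSets G := by
      rw [← hto]; exact List.mem_toFinset.mpr (l.get_mem _)
    obtain ⟨p, hp, hpe⟩ := (mem_edgeSets G hbip _).mp hkE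
    have hU : l.get i ∪ l.get j = fpair (a, b) ∪ fpair (c, d) := by
      rcases hor with ⟨h1, h2⟩ | ⟨h1, h2⟩ <;> rw [h1, h2]
      exact Finset.union_comm _ _
    have hksub : l.get k ⊆ fpair (a, b) ∪ fpair (c, d) := hU ▸ hsub2
    have hp1 : Sum.inl p.1 ∈ fpair (a, b) ∪ fpair (c, d) := by
      apply hksub; rw [hpe]; simp [fpair]
    have hp2 : Sum.inr p.2 ∈ fpair (a, b) ∪ fpair (c, d) := by
      apply hksub; rw [hpe]; simp [fpair]
    simp only [fpair, Finset.mem_union, Finset.mem_insert, Finset.mem_singleton,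
      Sum.inl.injEq, Sum.inr.injEq, reduceCtorEq, or_false, false_or] at hp1 hp2
    -- p.1 = a ∨ p.1 = c, p.2 = b ∨ p.2 = d
    have hkval : l.get k = fpair (a, b) ∨ l.get k = fpair (c, d) := by
      rcases hp1 with h1 | h1 <;> rcases hp2 with h2 | h2
      · left; rw [hpe]; rw [show p = (a, b) from Prod.ext h1 h2]
      · exfalso; apply hd'; rw [← h1, ← h2]; exact hp
      · exfalso; apply hb'; rw [← h1, ← h2]; exact hp
      · right; rw [hpe]; rw [show p = (c, d) from Prod.ext h1 h2]
    have hdisj : Disjoint (fpair (a, b)) (fpair (c, d)) := fpair_disjoint hac hbd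
    have hj2 : l.get j = fpair (a, b) ∨ l.get j = fpair (c, d) := by
      rcases hor with ⟨_, h2⟩ | ⟨_, h2⟩ <;> [right; left] <;> exact h2
    rcases hj2 with hj | hj <;> rcases hkval with hkv | hkv <;>
      rw [hj, hkv] at hcard
    · simp at hcard
    · rw [Finset.sdiff_eq_self_of_disjoint hdisj, card_fpair] at hcard; omega
    · rw [Finset.sdiff_eq_self_of_disjoint hdisj.symm, card_fpair] at hcard; omega
    · simp at hcard
  -- indices
  have hlt1 : List.idxOf (fpair (a, b)) l < l.length := List.idxOf_lt_length_iff.mpr hE1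
  have hlt2 : List.idxOf (fpair (c, d)) l < l.length := List.idxOf_lt_length_iff.mpr hE2
  set i : Fin l.length := ⟨_, hlt1⟩
  set j : Fin l.length := ⟨_, hlt2⟩
  have hgi : l.get i = fpair (a, b) := List.idxOf_get hlt1
  have hgj : l.get j = fpair (c, d) := List.idxOf_get hlt2
  have hij : (i : ℕ) ≠ (j : ℕ) := by
    intro h
    apply hne
    rw [← hgi, ← hgj]
    congr 1
    exact Fin.ext h
  rcases lt_or_gt_of_ne hij with h | h
  · exact main i j h (Or.inl ⟨hgi, hgj⟩)
  · exact main j i h (Or.inr ⟨hgj, hgi⟩)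

lemma chainY_of_chainX (hX : ∀ a c : Fin m, NX G a ⊆ NX G c ∨ NX G c ⊆ NX G a)
    (b d : Fin n) : NY G b ⊆ NY G d ∨ NY G d ⊆ NY G b := by
  by_contra hcon
  push_neg at hcon
  obtain ⟨a, ha, ha'⟩ := Finset.not_subset.mp hcon.1
  obtain ⟨c, hc, hc'⟩ := Finset.not_subset.mp hcon.2
  rw [mem_NY] at ha hc
  rw [mem_NY] at ha' hc'
  rcases hX a c with h | h
  · exact hc' ((mem_NX G).mp (h ((mem_NX G).mpr ha)))
  · exact ha' ((mem_NX G).mp (h ((mem_NX G).mpr hc)))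

lemma subset_of_chain_of_card_le {α : Type*} [DecidableEq α] {A B : Finset α}
    (h : A ⊆ B ∨ B ⊆ A) (hc : A.card ≤ B.card) : A ⊆ B := by
  rcases h with h | h
  · exact h
  · exact le_of_eq (Finset.eq_of_subset_of_card_le h hc).symm

lemma forward
    (hbip : ∀ a b : Fin m ⊕ Fin n, G.Adj a b →
      (a.isLeft = true ∧ b.isRight = true) ∨ (a.isRight = true ∧ b.isLeft = true))
    (hSS : StronglyShellable (edgeSets G)) :
    ∃ (σ : Equiv.Perm (Fin m)) (τ : Equiv.Perm (Fin n)),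
      ∀ (i r : Fin m) (j s : Fin n), G.Adj (Sum.inl (σ i)) (Sum.inr (τ j)) →
        r ≤ i → s ≤ j → G.Adj (Sum.inl (σ r)) (Sum.inr (τ s)) := by
  have hX := chainX G hbip hSS
  have hY := chainY_of_chainX G hX
  set σ := Tuple.sort (fun a => n - (NX G a).card) with hσ
  set τ := Tuple.sort (fun b => m - (NY G b).card) with hτ
  refine ⟨σ, τ, ?_⟩
  have hmonoX : ∀ {r i : Fin m}, r ≤ i → NX G (σ i) ⊆ NX G (σ r) := by
    intro r i hri
    have hkey : n - (NX G (σ r)).card ≤ n - (NX G (σ i)).card :=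
      Tuple.monotone_sort (fun a => n - (NX G a).card) hri
    apply subset_of_chain_of_card_le (hX _ _)
    have h1 : (NX G (σ r)).card ≤ n := by
      simpa using Finset.card_le_card (Finset.subset_univ (NX G (σ r)))
    have h2 : (NX G (σ i)).card ≤ n := by
      simpa using Finset.card_le_card (Finset.subset_univ (NX G (σ i)))
    omega
  have hmonoY : ∀ {s j : Fin n}, s ≤ j → NY G (τ j) ⊆ NY G (τ s) := by
    intro s j hsj
    have hkey : m - (NY G (τ s)).card ≤ m - (NY G (τ j)).card :=
      Tuple.monotone_sort (fun b => m - (NY G b).card) hsj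
    apply subset_of_chain_of_card_le (hY _ _)
    have h1 : (NY G (τ s)).card ≤ m := by
      simpa using Finset.card_le_card (Finset.subset_univ (NY G (τ s)))
    have h2 : (NY G (τ j)).card ≤ m := by
      simpa using Finset.card_le_card (Finset.subset_univ (NY G (τ j)))
    omega
  intro i r j s hadj hri hsj
  have h1 : τ j ∈ NX G (σ r) := hmonoX hri ((mem_NX G).mpr hadj)
  have h2 : σ r ∈ NY G (τ j) := (mem_NY G).mpr ((mem_NX G).mp h1)
  have h3 : σ r ∈ NY G (τ s) := hmonoY hsj h2
  exact (mem_NY G).mp h3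

/-! ## Backward direction -/

def decode {m n : ℕ} (t : Fin (m * n)) : Fin m × Fin n :=
  have hn : 0 < n := by
    rcases Nat.eq_zero_or_pos n with h | h
    · exact absurd (h ▸ t.2 : t.1 < m * 0) (by simp)
    · exact h
  (⟨t.1 / n, by rw [Nat.div_lt_iff_lt_mul hn]; exact t.2⟩, ⟨t.1 % n, Nat.mod_lt _ hn⟩)

def key {m n : ℕ} (p : Fin m × Fin n) : ℕ := p.1.1 * n + p.2.1

lemma key_decode {m n : ℕ} (t : Fin (m * n)) : key (decode t) = t.1 := by
  simp only [key, decode]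
  rw [mul_comm]
  exact Nat.div_add_mod t.1 n

lemma key_lt_iff_or {m n : ℕ} {p q : Fin m × Fin n} :
    key p < key q → p.1 = q.1 ∧ p.2.1 < q.2.1 ∨ p.1.1 < q.1.1 := by
  intro h
  unfold key at h
  rcases lt_trichotomy p.1.1 q.1.1 with h1 | h1 | h1
  · exact Or.inr h1
  · left
    refine ⟨Fin.ext h1, ?_⟩
    rw [h1] at h
    omega
  · exfalso
    have hb := p.2.2
    have hd := q.2.2
    have : q.1.1 + 1 ≤ p.1.1 := h1
    have h2 : (q.1.1 + 1) * n ≤ p.1.1 * n := Nat.mul_le_mul_right n this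
    rw [add_mul, one_mul] at h2
    omega

lemma decode_surjective {m n : ℕ} : Function.Surjective (decode (m := m) (n := n)) := by
  intro p
  have hn : 0 < n := p.2.pos
  have hlt : p.2.1 + p.1.1 * n < m * n := by
    have h1 : p.1.1 + 1 ≤ m := p.1.2
    have h2 : (p.1.1 + 1) * n ≤ m * n := Nat.mul_le_mul_right n h1
    rw [add_mul, one_mul] at h2
    have := p.2.2
    omega
  refine ⟨⟨p.2.1 + p.1.1 * n, hlt⟩, ?_⟩
  have h1 : (p.2.1 + p.1.1 * n) / n = p.1.1 := by
    rw [Nat.add_mul_div_right _ _ hn, Nat.div_eq_of_lt p.2.2, zero_add]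
  have h2 : (p.2.1 + p.1.1 * n) % n = p.2.1 := by
    rw [Nat.add_mul_mod_self_right]
    exact Nat.mod_eq_of_lt p.2.2
  simp only [decode]
  ext
  · exact h1
  · exact h2

lemma decode_injective {m n : ℕ} : Function.Injective (decode (m := m) (n := n)) := by
  intro s t h
  have := key_decode (m := m) (n := n) s
  rw [h, key_decode] at this
  exact Fin.ext this.symm

lemma backward (σ : Equiv.Perm (Fin m)) (τ : Equiv.Perm (Fin n))
    (hbip : ∀ a b : Fin m ⊕ Fin n, G.Adj a b →
      (a.isLeft = true ∧ b.isRight = true) ∨ (a.isRight = true ∧ b.isLeft = true))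
    (hF : ∀ (i r : Fin m) (j s : Fin n), G.Adj (Sum.inl (σ i)) (Sum.inr (τ j)) →
      r ≤ i → s ≤ j → G.Adj (Sum.inl (σ r)) (Sum.inr (τ s))) :
    StronglyShellable (edgeSets G) := by
  classical
  set adj' : Fin m × Fin n → Prop := fun p => G.Adj (Sum.inl (σ p.1)) (Sum.inr (τ p.2)) with hadj'
  set P : List (Fin m × Fin n) :=
    ((List.finRange (m * n)).map decode).filter (fun p => adj' p) with hP
  have hPnd : P.Nodup :=
    (((List.nodup_finRange _).map decode_injective)).filter _
  have hPmem : ∀ p : Fin m × Fin n, p ∈ P ↔ adj' p := by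
    intro p
    rw [hP, List.mem_filter]
    simp only [List.mem_map, List.mem_finRange, true_and, decide_eq_true_eq]
    constructor
    · tauto
    · intro h
      exact ⟨decode_surjective p, h⟩
  have hPpw : P.Pairwise (fun p q => key p < key q) := by
    apply List.Pairwise.sublist List.filter_sublist
    rw [List.pairwise_map]
    apply (List.pairwise_lt_finRange (m * n)).imp
    intro s t hst
    rw [key_decode, key_decode]
    exact hst
  set fp : Fin m × Fin n → Finset (Fin m ⊕ Fin n) := fun p => fpair (σ p.1, τ p.2) with hfp
  have hfpinj : Function.Injective fp := by
    intro p q h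
    have h0 := fpair_inj h
    exact Prod.ext (σ.injective (congrArg Prod.fst h0)) (τ.injective (congrArg Prod.snd h0))
  refine ⟨P.map fp, hPnd.map hfpinj, ?_, ?_⟩
  · ext S
    rw [List.mem_toFinset, List.mem_map, mem_edgeSets G hbip]
    constructor
    · rintro ⟨p, hp, rfl⟩
      exact ⟨(σ p.1, τ p.2), (hPmem p).mp hp, rfl⟩
    · rintro ⟨q, hq, rfl⟩
      refine ⟨(σ.symm q.1, τ.symm q.2), (hPmem _).mpr ?_, ?_⟩
      · simp only [hadj', Equiv.apply_symm_apply]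
        exact hq
      · simp [hfp]
  · intro i j hij
    have hlen : (P.map fp).length = P.length := List.length_map _
    have hi : (i : ℕ) < P.length := by rw [← hlen]; exact i.2
    have hj : (j : ℕ) < P.length := by rw [← hlen]; exact j.2
    set p := P.get ⟨i, hi⟩ with hpdef
    set q := P.get ⟨j, hj⟩ with hqdef
    have hgi : (P.map fp).get i = fp p := by
      simp [hpdef, List.get_eq_getElem, List.getElem_map]
    have hgj : (P.map fp).get j = fp q := by
      simp [hqdef, List.get_eq_getElem, List.getElem_map]
    have hkey : key p < key q :=
      List.pairwise_iff_get.mp hPpw ⟨i, hi⟩ ⟨j, hj⟩ hij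
    have hqadj : adj' q := (hPmem q).mp (P.get_mem _)
    have hpadj : adj' p := (hPmem p).mp (P.get_mem _)
    rcases key_lt_iff_or hkey with ⟨h1, h2⟩ | h1
    · -- same first coordinate: take k = i
      have hne : (Sum.inr (τ q.2) : Fin m ⊕ Fin n) ≠ Sum.inr (τ p.2) := by
        simp only [ne_eq, Sum.inr.injEq]
        intro h
        exact absurd (τ.injective h) (fun hh => by omega)
      have hsd : fp q \ fp p = {Sum.inr (τ q.2)} := by
        ext x
        simp only [hfp, fpair, h1, Finset.mem_sdiff, Finset.mem_insert,
          Finset.mem_singleton]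
        constructor
        · rintro ⟨rfl | rfl, hx⟩
          · exact absurd (Or.inl rfl) hx
          · rfl
        · rintro rfl
          refine ⟨Or.inr rfl, ?_⟩
          rintro (h | h)
          · exact absurd h (by simp)
          · exact hne h
      refine ⟨i, hij, ?_, ?_, ?_⟩
      · rw [hgi, hgj, hsd]
        exact Finset.card_singleton _
      · rw [hgi]
        exact Finset.inter_subset_left
      · exact Finset.subset_union_left
    · -- p.1 < q.1
      have hple : p.1 ≤ q.1 := le_of_lt (Fin.lt_def.mpr h1)
      have hnewadj : adj' (p.1, q.2) := hF q.1 p.1 q.2 q.2 hqadj hple le_rfl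
      have hmem : (p.1, q.2) ∈ P := (hPmem _).mpr hnewadj
      obtain ⟨k0, hgetk⟩ := List.mem_iff_get.mp hmem
      have hn0 : 0 < n := q.2.pos
      have hkeyk : key ((p.1, q.2) : Fin m × Fin n) < key q := by
        have h2 : p.1.1 * n < q.1.1 * n := Nat.mul_lt_mul_of_lt_of_le h1 le_rfl hn0
        unfold key
        simp only
        omega
      have hkj : (k0 : ℕ) < (j : ℕ) := by
        rcases lt_trichotomy (k0 : ℕ) (j : ℕ) with h | h | h
        · exact h
        · exfalso
          have hq2 : q = (p.1, q.2) := by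
            rw [hqdef, ← hgetk]
            congr 1
            exact Fin.ext h.symm
          have hqq : q.1 = p.1 := by rw [hq2]
          rw [hqq] at h1
          exact lt_irrefl _ h1
        · exfalso
          have hlt := List.pairwise_iff_get.mp hPpw ⟨j, hj⟩ k0 h
          rw [hgetk, ← hqdef] at hlt
          omega
      have hgk : (P.map fp).get ⟨(k0 : ℕ), by rw [hlen]; exact k0.2⟩ = fp (p.1, q.2) := by
        simp only [List.get_eq_getElem, List.getElem_map]
        rw [← hgetk]
        rfl
      have hAC : (Sum.inl (σ p.1) : Fin m ⊕ Fin n) ≠ Sum.inl (σ q.1) := by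
        simp only [ne_eq, Sum.inl.injEq]
        intro h
        exact absurd (σ.injective h) (fun hh => by rw [hh] at h1; exact lt_irrefl _ h1)
      refine ⟨⟨(k0 : ℕ), by rw [hlen]; exact k0.2⟩, hkj, ?_, ?_, ?_⟩
      · rw [hgj, hgk]
        have hsd : fp q \ fp (p.1, q.2) = {Sum.inl (σ q.1)} := by
          ext x
          simp only [hfp, fpair, Finset.mem_sdiff, Finset.mem_insert, Finset.mem_singleton]
          constructor
          · rintro ⟨rfl | rfl, hx⟩
            · rfl
            · exact absurd (Or.inr rfl) hx
          · rintro rfl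
            refine ⟨Or.inl rfl, ?_⟩
            rintro (h | h)
            · exact hAC.symm h
            · exact absurd h (by simp)
        rw [hsd]
        exact Finset.card_singleton _
      · rw [hgi, hgj, hgk]
        intro x hx
        rw [Finset.mem_inter] at hx
        obtain ⟨hx1, hx2⟩ := hx
        simp only [hfp, fpair, Finset.mem_insert, Finset.mem_singleton] at hx1 hx2 ⊢
        rcases hx1 with rfl | rfl
        · exact Or.inl rfl
        · rcases hx2 with h | h
          · exact absurd h (by simp)
          · exact Or.inr h
      · rw [hgi, hgj, hgk]
        intro x hx
        simp only [hfp, fpair, Finset.mem_insert, Finset.mem_singleton,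
          Finset.mem_union] at hx ⊢
        rcases hx with rfl | rfl
        · exact Or.inl (Or.inl rfl)
        · exact Or.inr (Or.inr rfl)

end Stmt19

/-- A bipartite graph with parts X = Fin m, Y = Fin n and no isolated vertices is edgewise
strongly shellable iff, after suitable reorderings of the two parts, it is a Ferrers graph. -/
theorem stmt19 (m n : ℕ) (G : SimpleGraph (Fin m ⊕ Fin n)) [DecidableRel G.Adj]
    (hbip : ∀ a b : Fin m ⊕ Fin n, G.Adj a b →
      (a.isLeft = true ∧ b.isRight = true) ∨ (a.isRight = true ∧ b.isLeft = true))
    (hnoiso : ∀ v : Fin m ⊕ Fin n, ∃ u, G.Adj v u) :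
    StronglyShellable (edgeSets G) ↔
      ∃ (σ : Equiv.Perm (Fin m)) (τ : Equiv.Perm (Fin n)),
        ∀ (i r : Fin m) (j s : Fin n), G.Adj (.inl (σ i)) (.inr (τ j)) →
          r ≤ i → s ≤ j → G.Adj (.inl (σ r)) (.inr (τ s)) := by
  constructor
  · intro hSS
    exact Stmt19.forward G hbip hSS
  · rintro ⟨σ, τ, hF⟩
    exact Stmt19.backward G σ τ hbip hF
end
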